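/- arXiv:1710.02224 — 8 statements merged into one kernel-verified Lean document; each statement's English description precedes it below -/
import Mathlib

section
/- For every d ≥ 1 and every natural number n with 1 ≤ n < 2^d, the minimum of ∑_{j=0}^{d−1} a_j over all tuples (a_0, …, a_{d−1}) of natural numbers satisfying ∑_{j=0}^{d−1} a_j · 2^j = n equals the binary digit sum of n, i.e. equals (Nat.digits 2 n).sum. (This is the combinatorial core of the paper's shortest-path formula d_i(n) = ∑_j b_j + d for the DilatedRNN with dilations 2^0, …, 2^{d−1}, where b_j are the binary digits of n.) -/
open Nat

private def S (n : ℕ) : ℕ := (Nat.digits 2 n).sum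

private lemma S_def (n : ℕ) (hn : n ≠ 0) : S n = n % 2 + S (n / 2) := by
  unfold S
  rw [Nat.digits_def' (by norm_num : (1:ℕ) < 2) (Nat.pos_of_ne_zero hn), List.sum_cons]

private lemma S_zero : S 0 = 0 := by norm_num [S]
private lemma S_one : S 1 = 1 := by norm_num [S]

private lemma S_double (n : ℕ) : S (2 * n) = S n := by
  rcases Nat.eq_zero_or_pos n with h | h
  · simp [h, S_zero]
  · rw [S_def (2 * n) (by omega)]
    simp [Nat.mul_div_cancel_left _ (by norm_num : 0 < 2)]

private lemma S_double_add_one (n : ℕ) : S (2 * n + 1) = S n + 1 := by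
  rw [S_def (2 * n + 1) (by omega)]
  have h1 : (2 * n + 1) % 2 = 1 := by omega
  have h2 : (2 * n + 1) / 2 = n := by omega
  rw [h1, h2]; ring

private lemma S_succ_le (n : ℕ) : S (n + 1) ≤ S n + 1 := by
  induction n using Nat.strong_induction_on with
  | _ n ih =>
    obtain ⟨a, ha | ha⟩ := Nat.even_or_odd' n <;> subst ha
    · rw [show 2 * a + 1 = 2 * a + 1 from rfl, S_double_add_one, S_double]
    · have h1 : 2 * a + 1 + 1 = 2 * (a + 1) := by ring
      rw [h1, S_double, S_double_add_one]
      rcases Nat.eq_zero_or_pos a with h | h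
      · subst h; simp [S_one, S_zero]
      · have := ih a (by omega)
        omega

private lemma S_subadd : ∀ m n : ℕ, S (m + n) ≤ S m + S n := by
  intro m
  induction m using Nat.strong_induction_on with
  | _ m ih =>
    intro n
    rcases Nat.eq_zero_or_pos m with hm | hm
    · simp [hm, S_zero]
    rcases Nat.eq_zero_or_pos n with hn | hn
    · simp [hn, S_zero]
    obtain ⟨a, ha⟩ := Nat.even_or_odd' m
    obtain ⟨b, hb⟩ := Nat.even_or_odd' n
    rcases ha with ha | ha <;> rcases hb with hb | hb <;> subst ha <;> subst hb
    · have : 2 * a + 2 * b = 2 * (a + b) := by ring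
      rw [this, S_double, S_double, S_double]
      exact ih a (by omega) b
    · have : 2 * a + (2 * b + 1) = 2 * (a + b) + 1 := by ring
      rw [this, S_double_add_one, S_double, S_double_add_one]
      have := ih a (by omega) b
      omega
    · have : 2 * a + 1 + 2 * b = 2 * (a + b) + 1 := by ring
      rw [this, S_double_add_one, S_double_add_one, S_double]
      have := ih a (by omega) b
      omega
    · have : 2 * a + 1 + (2 * b + 1) = 2 * (a + b + 1) := by ring
      rw [this, S_double, S_double_add_one, S_double_add_one]
      have h1 : S (a + b + 1) ≤ S (a + b) + 1 := S_succ_le _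
      have h2 : S (a + b) ≤ S a + S b := ih a (by omega) b
      omega

private lemma S_mul_pow (x j : ℕ) : S (x * 2 ^ j) = S x := by
  induction j with
  | zero => simp
  | succ k ihk =>
    have : x * 2 ^ (k + 1) = 2 * (x * 2 ^ k) := by ring
    rw [this, S_double, ihk]

private lemma S_le (n : ℕ) : S n ≤ n := Nat.digit_sum_le 2 n

/-- For every `d ≥ 1` and every `n` with `1 ≤ n < 2^d`, the minimum of `∑ a j`
over all tuples `a : Fin d → ℕ` with `∑ a j * 2^j = n` equals the binary digit
sum of `n`. -/
theorem min_coin_count_pow_two (d n : ℕ) (hd : 1 ≤ d) (hn : 1 ≤ n) (hn' : n < 2 ^ d) :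
    IsLeast {k : ℕ | ∃ a : Fin d → ℕ,
        (∑ j : Fin d, a j * 2 ^ (j : ℕ)) = n ∧ (∑ j : Fin d, a j) = k}
      ((Nat.digits 2 n).sum) := by
  constructor
  · -- membership: the digits themselves give a representation
    set L := Nat.digits 2 n with hL
    have hlen : L.length ≤ d := by
      rw [hL, Nat.digits_len 2 n (by norm_num) (by omega)]
      have : Nat.log 2 n < d := by
        have := (Nat.log_lt_iff_lt_pow (by norm_num : 1 < 2) (by omega : n ≠ 0)).mpr hn'
        exact this
      omega
    refine ⟨fun j => L.getD j 0, ?_, ?_⟩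
    · have key : ∀ m, (∑ j ∈ Finset.range m, L.getD j 0 * 2 ^ j)
          = Nat.ofDigits 2 (L.take m) := by
        intro m
        induction m with
        | zero => simp [Nat.ofDigits]
        | succ k ihk =>
          rw [Finset.sum_range_succ, ihk]
          by_cases hk : k < L.length
          · rw [List.take_succ, List.getElem?_eq_getElem hk]
            rw [Nat.ofDigits_append]
            have hmin : (L.take k).length = k := by
              rw [List.length_take]; omega
            simp [List.getD, List.getElem?_eq_getElem hk, hmin]
            ring
          · push_neg at hk
            rw [List.take_of_length_le hk, List.take_of_length_le (by omega),
              List.getD_eq_default _ _ (by omega)]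
            simp
      have := key d
      rw [List.take_of_length_le hlen] at this
      rw [Fin.sum_univ_eq_sum_range (fun j => L.getD j 0 * 2 ^ j), this, hL,
        Nat.ofDigits_digits]
    · have key : ∀ m, (∑ j ∈ Finset.range m, L.getD j 0) = (L.take m).sum := by
        intro m
        induction m with
        | zero => simp
        | succ i ihi =>
          rw [Finset.sum_range_succ, ihi]
          by_cases hi : i < L.length
          · rw [List.take_succ, List.getElem?_eq_getElem hi, List.sum_append]
            simp [List.getD, List.getElem?_eq_getElem hi]
          · push_neg at hi
            rw [List.take_of_length_le hi, List.take_of_length_le (by omega),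
              List.getD_eq_default _ _ (by omega)]
            simp
      rw [Fin.sum_univ_eq_sum_range (fun j => L.getD j 0), key d,
        List.take_of_length_le hlen]
  · -- lower bound
    rintro k ⟨a, hrep, hsum⟩
    have h1 : S n ≤ ∑ j : Fin d, S (a j * 2 ^ (j : ℕ)) := by
      rw [← hrep]
      exact Finset.le_sum_of_subadditive S S_zero.le S_subadd _ _
    have h2 : (∑ j : Fin d, S (a j * 2 ^ (j : ℕ))) ≤ ∑ j : Fin d, a j := by
      apply Finset.sum_le_sum
      intro j _
      rw [S_mul_pow]
      exact S_le (a j)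
    have : S n ≤ k := by rw [← hsum]; exact le_trans h1 h2
    exact this
end

section
/- For every natural number n and every finitely supported function a : ℕ → ℕ with ∑_j a_j · 2^j = n, one has ∑_j a_j ≥ (Nat.digits 2 n).sum. That is, the binary digit sum of n is a lower bound on the total number of (not necessarily distinct) powers of two summing to n. -/
private lemma digitSum_two_def {n : ℕ} (hn : n ≠ 0) :
    (Nat.digits 2 n).sum = n % 2 + (Nat.digits 2 (n / 2)).sum := by
  rw [Nat.digits_def' (by norm_num : 1 < 2) (Nat.pos_of_ne_zero hn)]
  simp

private lemma digitSum_subadd_aux : ∀ N m k : ℕ, m + k ≤ N → (Nat.digits 2 (m + k)).sum ≤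
    (Nat.digits 2 m).sum + (Nat.digits 2 k).sum := by
  intro N
  induction N with
  | zero =>
    intro m k h
    obtain ⟨rfl, rfl⟩ : m = 0 ∧ k = 0 := by omega
    simp
  | succ N ih =>
    intro m k hN
    rcases Nat.eq_zero_or_pos m with rfl | hm
    · simp
    rcases Nat.eq_zero_or_pos k with rfl | hk
    · simp
    rw [digitSum_two_def hm.ne', digitSum_two_def hk.ne',
        digitSum_two_def (by omega : m + k ≠ 0)]
    rcases Nat.even_or_odd m with ⟨m', rfl⟩ | ⟨m', rfl⟩ <;>
      rcases Nat.even_or_odd k with ⟨k', rfl⟩ | ⟨k', rfl⟩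
    · have h1 : (m' + m' + (k' + k')) / 2 = m' + k' := by omega
      have h2 : (m' + m') / 2 = m' := by omega
      have h3 : (k' + k') / 2 = k' := by omega
      rw [h1, h2, h3]
      have := ih m' k' (by omega)
      omega
    · have h1 : (m' + m' + (2 * k' + 1)) / 2 = m' + k' := by omega
      have h2 : (m' + m') / 2 = m' := by omega
      have h3 : (2 * k' + 1) / 2 = k' := by omega
      rw [h1, h2, h3]
      have := ih m' k' (by omega)
      omega
    · have h1 : (2 * m' + 1 + (k' + k')) / 2 = m' + k' := by omega
      have h2 : (2 * m' + 1) / 2 = m' := by omega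
      have h3 : (k' + k') / 2 = k' := by omega
      rw [h1, h2, h3]
      have := ih m' k' (by omega)
      omega
    · have h1 : (2 * m' + 1 + (2 * k' + 1)) / 2 = m' + k' + 1 := by omega
      have h2 : (2 * m' + 1) / 2 = m' := by omega
      have h3 : (2 * k' + 1) / 2 = k' := by omega
      rw [h1, h2, h3]
      have h4 := ih m' (k' + 1) (by omega)
      rw [← Nat.add_assoc] at h4
      have h5 := ih 1 k' (by omega)
      rw [Nat.add_comm 1 k'] at h5
      have h6 : (Nat.digits 2 1).sum = 1 := by simp
      omega

private lemma digitSum_subadd (m k : ℕ) : (Nat.digits 2 (m + k)).sum ≤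
    (Nat.digits 2 m).sum + (Nat.digits 2 k).sum :=
  digitSum_subadd_aux (m + k) m k le_rfl

private lemma digitSum_pow_two (j : ℕ) : (Nat.digits 2 (2 ^ j)).sum ≤ 1 := by
  induction j with
  | zero => simp
  | succ j ih =>
    rw [digitSum_two_def (by positivity)]
    have h1 : 2 ^ (j + 1) % 2 = 0 := by
      simp [pow_succ, Nat.mul_mod_left]
    have h2 : 2 ^ (j + 1) / 2 = 2 ^ j := by
      rw [pow_succ]; omega
    rw [h1, h2]; omega

private lemma digitSum_mul_pow (c j : ℕ) : (Nat.digits 2 (c * 2 ^ j)).sum ≤ c := by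
  induction c with
  | zero => simp
  | succ c ih =>
    have : (c + 1) * 2 ^ j = c * 2 ^ j + 2 ^ j := by ring
    rw [this]
    have := digitSum_subadd (c * 2 ^ j) (2 ^ j)
    have := digitSum_pow_two j
    omega

/-- For every `n : ℕ` and every finitely supported `a : ℕ →₀ ℕ` with
`∑ j, a j * 2^j = n`, the total multiplicity `∑ j, a j` is at least the binary
digit sum of `n`. -/
theorem digitSum_le_of_sum_pow_two (n : ℕ) (a : ℕ →₀ ℕ)
    (h : (a.sum fun j aj => aj * 2 ^ j) = n) :
    (Nat.digits 2 n).sum ≤ a.sum fun _ aj => aj := by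
  subst h
  induction a using Finsupp.induction with
  | zero => simp
  | single_add j b f hj hb ih =>
    rw [Finsupp.sum_add_index (by simp) (by intros; ring),
        Finsupp.sum_add_index (by simp) (by intros; ring),
        Finsupp.sum_single_index (by simp), Finsupp.sum_single_index (by simp)]
    have h1 := digitSum_subadd (b * 2 ^ j) (f.sum fun j aj => aj * 2 ^ j)
    have h2 := digitSum_mul_pow b j
    omega
end

section
/- For every integer M ≥ 2, every d ≥ 1, and every natural number n with 1 ≤ n < M^d, the minimum of ∑_{j=0}^{d−1} a_j over all tuples (a_0, …, a_{d−1}) of natural numbers satisfying ∑_{j=0}^{d−1} a_j · M^j = n equals the base-M digit sum of n, i.e. equals (Nat.digits M n).sum. (This is the minimal-path-length computation for a DilatedRNN with exponentially increasing dilations M^0, …, M^{d−1}.) -/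
open Finset

/-- Digit-sum formula over a sufficiently long range. -/
lemma sum_div_pow_eq (p n K : ℕ) (hp : 2 ≤ p) (hK : Nat.log p n < K) :
    (p - 1) * ∑ i ∈ range K, n / p ^ (i + 1) = n - (Nat.digits p n).sum := by
  have h := Nat.sub_one_mul_sum_log_div_pow_eq_sub_sum_digits (p := p) n
  rw [← h]
  congr 1
  refine (Finset.sum_subset (Finset.range_subset_range.2 hK) ?_).symm
  intro i hi hni
  simp only [mem_range, not_lt] at hni
  have : n < p ^ (i + 1) := by
    calc n < p ^ (Nat.log p n + 1) := Nat.lt_pow_succ_log_self (by omega) n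
    _ ≤ p ^ (i + 1) := Nat.pow_le_pow_right (by omega) (by omega)
  exact Nat.div_eq_of_lt this

lemma digitsum_subadd (p x y : ℕ) (hp : 2 ≤ p) :
    (Nat.digits p (x + y)).sum ≤ (Nat.digits p x).sum + (Nat.digits p y).sum := by
  set K := Nat.log p (x + y) + 1 with hK
  have hx : Nat.log p x < K := by
    have := Nat.log_mono_right (b := p) (Nat.le_add_right x y); omega
  have hy : Nat.log p y < K := by
    have := Nat.log_mono_right (b := p) (Nat.le_add_left y x); omega
  have hxy : Nat.log p (x + y) < K := by omega
  have ex := sum_div_pow_eq p x K hp hx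
  have ey := sum_div_pow_eq p y K hp hy
  have exy := sum_div_pow_eq p (x + y) K hp hxy
  have hle : (p - 1) * ∑ i ∈ range K, x / p ^ (i + 1)
      + (p - 1) * ∑ i ∈ range K, y / p ^ (i + 1)
      ≤ (p - 1) * ∑ i ∈ range K, (x + y) / p ^ (i + 1) := by
    rw [← Nat.mul_add]
    refine Nat.mul_le_mul_left _ ?_
    rw [← Finset.sum_add_distrib]
    exact Finset.sum_le_sum fun i _ => Nat.add_div_le_add_div x y _
  have dx := Nat.digit_sum_le p x
  have dy := Nat.digit_sum_le p y
  have dxy := Nat.digit_sum_le p (x + y)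
  omega

lemma digitsum_mul_pow (p m j : ℕ) (hp : 2 ≤ p) :
    (Nat.digits p (m * p ^ j)).sum = (Nat.digits p m).sum := by
  induction j with
  | zero => simp
  | succ j ih =>
    rcases Nat.eq_zero_or_pos m with rfl | hm
    · simp
    · have hpos : 0 < m * p ^ (j + 1) := by positivity
      have : m * p ^ (j + 1) = (m * p ^ j) * p := by ring
      rw [this, ← ih]
      rw [Nat.digits_def' (by omega : 1 < p) (by positivity)]
      rw [Nat.mul_div_cancel _ (show 0 < p by omega), Nat.mul_mod_left]
      simp

lemma digitsum_sum_le {ι : Type*} (p : ℕ) (hp : 2 ≤ p) (s : Finset ι) (f : ι → ℕ) :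
    (Nat.digits p (∑ i ∈ s, f i)).sum ≤ ∑ i ∈ s, (Nat.digits p (f i)).sum := by
  classical
  induction s using Finset.cons_induction with
  | empty => simp
  | cons a s ha ih =>
    rw [Finset.sum_cons, Finset.sum_cons]
    exact (digitsum_subadd p _ _ hp).trans (Nat.add_le_add_left ih _)

/-- For every `M ≥ 2`, `d ≥ 1`, and `n` with `1 ≤ n < M^d`, the minimum of
`∑ a j` over all tuples `a : Fin d → ℕ` with `∑ a j * M^j = n` equals the
base-`M` digit sum of `n`. -/
theorem min_coin_count_pow (M d n : ℕ) (hM : 2 ≤ M) (hd : 1 ≤ d)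
    (hn : 1 ≤ n) (hn' : n < M ^ d) :
    IsLeast {k : ℕ | ∃ a : Fin d → ℕ,
        (∑ j : Fin d, a j * M ^ (j : ℕ)) = n ∧ (∑ j : Fin d, a j) = k}
      ((Nat.digits M n).sum) := by
  constructor
  · -- membership: use the digits as the tuple
    set L := Nat.digits M n with hL
    have hlen : L.length ≤ d := by
      rw [hL, Nat.digits_len M n (by omega) (by omega)]
      have : Nat.log M n < d := Nat.log_lt_of_lt_pow (by omega) hn'
      omega
    refine ⟨fun j => L.getD j 0, ?_, ?_⟩
    · -- sum of digits * M^j = n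
      show ∑ j : Fin d, L.getD (j : ℕ) 0 * M ^ (j : ℕ) = n
      have key : ∀ (l : List ℕ), ∑ j ∈ range l.length, l.getD j 0 * M ^ j
          = Nat.ofDigits M l := by
        intro l
        induction l with
        | nil => simp [Nat.ofDigits]
        | cons a t ih =>
          rw [List.length_cons, Finset.sum_range_succ', Nat.ofDigits_cons]
          simp only [List.getD_cons_succ, List.getD_cons_zero, pow_zero, mul_one]
          rw [← ih, Finset.mul_sum]
          rw [add_comm]
          congr 1
          refine Finset.sum_congr rfl fun i _ => ?_
          ring
      have hrw : ∑ j : Fin d, L.getD (j : ℕ) 0 * M ^ (j : ℕ)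
          = ∑ j ∈ range d, L.getD j 0 * M ^ j :=
        Fin.sum_univ_eq_sum_range (fun j => L.getD j 0 * M ^ j) d
      rw [hrw]
      rw [← Finset.sum_subset (Finset.range_subset_range.2 hlen) (fun i _ hi => by
        simp only [mem_range, not_lt] at hi
        rw [List.getD_eq_default _ _ hi, zero_mul])]
      rw [key L, hL, Nat.ofDigits_digits]
    · -- sum of digits = digit sum
      show ∑ j : Fin d, L.getD (j : ℕ) 0 = L.sum
      have hrw : ∑ j : Fin d, L.getD (j : ℕ) 0
          = ∑ j ∈ range d, L.getD j 0 :=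
        Fin.sum_univ_eq_sum_range (fun j => L.getD j 0) d
      rw [hrw]
      rw [← Finset.sum_subset (Finset.range_subset_range.2 hlen) (fun i _ hi => by
        simp only [mem_range, not_lt] at hi
        rw [List.getD_eq_default _ _ hi])]
      have : ∀ (l : List ℕ), ∑ j ∈ range l.length, l.getD j 0 = l.sum := by
        intro l
        induction l with
        | nil => simp
        | cons a t ih =>
          rw [List.length_cons, Finset.sum_range_succ', List.sum_cons]
          simp only [List.getD_cons_succ, List.getD_cons_zero]
          rw [ih, add_comm]
      rw [this L]
  · -- lower bound
    rintro k ⟨a, hrep, rfl⟩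
    calc (Nat.digits M n).sum
        = (Nat.digits M (∑ j : Fin d, a j * M ^ (j : ℕ))).sum := by rw [hrep]
      _ ≤ ∑ j : Fin d, (Nat.digits M (a j * M ^ (j : ℕ))).sum :=
          digitsum_sum_le M hM Finset.univ _
      _ ≤ ∑ j : Fin d, a j := by
          refine Finset.sum_le_sum fun j _ => ?_
          rw [digitsum_mul_pow M (a j) j hM]
          exact Nat.digit_sum_le M (a j)
end

section
/- Greedy optimality for divisor chains: let s_1 = 1 and s_{i+1} = n_{i+1} · s_i for positive integers n_2, …, n_d (so s_1 ∣ s_2 ∣ ⋯ ∣ s_d). Then for every natural number n, the minimal coin count with denominations (s_1, …, s_d) equals the total greedy digit sum ⌊n / s_d⌋ + ∑_{i=1}^{d−1} ⌊(n mod s_{i+1}) / s_i⌋; in other words, the greedy algorithm (repeatedly using the largest denomination that fits) produces a representation n = ∑_i c_i s_i with the minimum possible total number of coins ∑_i c_i. -/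
private lemma chain_pos (s : ℕ → ℕ) (hs0 : s 0 = 1) (d : ℕ)
    (hchain : ∀ i, i + 1 < d → ∃ k, 0 < k ∧ s (i + 1) = k * s i) :
    ∀ i, i < d → 0 < s i := by
  intro i
  induction i with
  | zero => intro _; simp [hs0]
  | succ j ih =>
      intro h
      obtain ⟨k, hk, hs⟩ := hchain j h
      have := ih (by omega)
      rw [hs]; positivity

private lemma chain_dvd (s : ℕ → ℕ) (d : ℕ)
    (hchain : ∀ i, i + 1 < d → ∃ k, 0 < k ∧ s (i + 1) = k * s i) :
    ∀ j, j < d → ∀ i, i ≤ j → s i ∣ s j := by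
  intro j
  induction j with
  | zero => intro _ i hi; interval_cases i; exact dvd_rfl
  | succ m ih =>
      intro h i hi
      rcases Nat.eq_or_lt_of_le hi with rfl | hlt
      · exact dvd_rfl
      · obtain ⟨k, hk, hs⟩ := hchain m h
        rw [hs]
        exact (ih (by omega) i (by omega)).mul_left k

private lemma greedy_aux (s : ℕ → ℕ) (hs0 : s 0 = 1) :
    ∀ e : ℕ, (∀ i, i + 1 < e + 1 → ∃ k, 0 < k ∧ s (i + 1) = k * s i) → ∀ n : ℕ,
    IsLeast {k : ℕ | ∃ a : Fin (e + 1) → ℕ,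
        (∑ i : Fin (e + 1), a i * s (i : ℕ)) = n ∧ (∑ i : Fin (e + 1), a i) = k}
      (n / s e + ∑ i ∈ Finset.range e, (n % s (i + 1)) / s i) := by
  intro e
  induction e with
  | zero =>
      intro _ n
      constructor
      · exact ⟨fun _ => n, by simp [hs0], by simp [hs0]⟩
      · rintro k ⟨a, hrep, hcnt⟩
        simp [hs0] at hrep hcnt ⊢
        omega
  | succ e IH =>
      intro hchain n
      have hchain' : ∀ i, i + 1 < e + 1 → ∃ k, 0 < k ∧ s (i + 1) = k * s i :=
        fun i h => hchain i (by omega)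
      obtain ⟨K, hK, hsK⟩ := hchain e (by omega)
      have hse : 0 < s e := chain_pos s hs0 (e + 2) hchain e (by omega)
      have hse1 : 0 < s (e + 1) := by rw [hsK]; positivity
      have hdvd : ∀ i, i ≤ e → s (i + 1) ∣ s (e + 1) :=
        fun i hi => chain_dvd s (e + 2) hchain (e + 1) (by omega) (i + 1) (by omega)
      constructor
      · -- membership: greedy representation
        obtain ⟨a', ha'rep, ha'cnt⟩ := (IH hchain' (n % s (e + 1))).1
        refine ⟨Fin.snoc a' (n / s (e + 1)), ?_, ?_⟩
        · rw [Fin.sum_univ_castSucc]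
          simp only [Fin.snoc_castSucc, Fin.snoc_last, Fin.val_last, Fin.coe_castSucc]
          rw [ha'rep]
          exact Nat.mod_add_div' n (s (e + 1))
        · rw [Fin.sum_univ_castSucc]
          simp only [Fin.snoc_castSucc, Fin.snoc_last]
          rw [ha'cnt, Finset.sum_range_succ]
          have hmod : ∀ i ∈ Finset.range e,
              (n % s (e + 1)) % s (i + 1) / s i = n % s (i + 1) / s i := by
            intro i hi
            rw [Nat.mod_mod_of_dvd n (hdvd i (by simpa using (Finset.mem_range.mp hi).le))]
          rw [Finset.sum_congr rfl hmod]
          have : n % s (e + 1) % s (e + 1) = n % s (e + 1) :=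
            Nat.mod_mod_of_dvd n dvd_rfl
          omega
      · -- lower bound
        rintro k ⟨a, hrep, hcnt⟩
        set a' : Fin (e + 1) → ℕ := fun i => a i.castSucc with ha'
        set A : ℕ := a (Fin.last (e + 1)) with hA
        set m : ℕ := ∑ i : Fin (e + 1), a' i * s (i : ℕ) with hm
        have hrep' : m + A * s (e + 1) = n := by
          rw [← hrep, Fin.sum_univ_castSucc]
          simp [hm, ha', hA]
        have hcnt' : (∑ i : Fin (e + 1), a' i) + A = k := by
          rw [← hcnt]
          conv_rhs => rw [Fin.sum_univ_castSucc]
        have hlb := (IH hchain' m).2 ⟨a', rfl, rfl⟩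
        -- n % s(i+1) = m % s(i+1) for i ≤ e
        have hmodeq : ∀ i, i ≤ e → n % s (i + 1) = m % s (i + 1) := by
          intro i hi
          have : s (i + 1) ∣ A * s (e + 1) :=
            Dvd.dvd.mul_left (hdvd i hi) A
          obtain ⟨c, hc⟩ := this
          rw [← hrep', hc, Nat.add_mul_mod_self_left]
        have hmodtop : n % s (e + 1) = m % s (e + 1) := by
          rw [← hrep', Nat.add_mul_mod_self_right]
        have hdivtop : n / s (e + 1) = m / s (e + 1) + A := by
          rw [← hrep', Nat.add_mul_div_right _ _ hse1]
        -- key inequality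
        have hkey : m / s (e + 1) + m % s (e + 1) / s e ≤ m / s e := by
          have h1 : m / s (e + 1) = m / s e / K := by
            rw [hsK, mul_comm, ← Nat.div_div_eq_div_mul]
          have h2 : m % s (e + 1) / s e = m / s e % K := by
            rw [hsK, mul_comm]
            exact Nat.mod_mul_right_div_self m (s e) K
          set t := m / s e
          have h3 : K * (t / K) + t % K = t := Nat.div_add_mod t K
          have h4 : t / K ≤ K * (t / K) := Nat.le_mul_of_pos_left _ hK
          omega
        -- assemble
        rw [Finset.sum_range_succ]
        have hsum : ∑ i ∈ Finset.range e, n % s (i + 1) / s i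
            = ∑ i ∈ Finset.range e, m % s (i + 1) / s i := by
          refine Finset.sum_congr rfl fun i hi => ?_
          rw [hmodeq i (Finset.mem_range.mp hi).le]
        rw [hsum, hmodtop, hdivtop]
        calc m / s (e + 1) + A + (∑ i ∈ Finset.range e, m % s (i + 1) / s i
              + m % s (e + 1) / s e)
            = (m / s (e + 1) + m % s (e + 1) / s e)
              + (∑ i ∈ Finset.range e, m % s (i + 1) / s i) + A := by ring
          _ ≤ m / s e + (∑ i ∈ Finset.range e, m % s (i + 1) / s i) + A := by
              omega
          _ ≤ (∑ i : Fin (e + 1), a' i) + A := by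
              have := hlb
              omega
          _ = k := hcnt'

/-- Greedy optimality for divisor chains (`0`-based indexing: denominations
`s 0, …, s (d-1)` with `s 0 = 1` and each `s (i+1)` a positive multiple of
`s i`): for every `n`, the minimal coin count equals the total greedy digit
sum `⌊n / s (d-1)⌋ + ∑_{i<d-1} ⌊(n % s (i + 1)) / s i⌋`. -/
theorem greedy_optimal_divisor_chain (d : ℕ) (s : ℕ → ℕ) (hd : 1 ≤ d)
    (hs0 : s 0 = 1)
    (hchain : ∀ i, i + 1 < d → ∃ k, 0 < k ∧ s (i + 1) = k * s i)
    (n : ℕ) :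
    IsLeast {k : ℕ | ∃ a : Fin d → ℕ,
        (∑ i : Fin d, a i * s (i : ℕ)) = n ∧ (∑ i : Fin d, a i) = k}
      (n / s (d - 1) + ∑ i ∈ Finset.range (d - 1), (n % s (i + 1)) / s i) := by
  obtain ⟨e, rfl⟩ : ∃ e, d = e + 1 := ⟨d - 1, by omega⟩
  simpa using greedy_aux s hs0 e (by simpa using hchain) n
end

section
/- Total coin usage over one period for a divisor chain: let s_1 = 1 and s_{i+1} = n_{i+1} · s_i for positive integers n_2, …, n_d, and set m = s_d and q_i = s_{i+1}/s_i. Then 2 · ∑_{n=0}^{m−1} r(n) = m · ∑_{i=1}^{d−1} (q_i − 1), where r(n) is the minimal coin count of n with denominations (s_1, …, s_d). Equivalently, the average minimal coin count over n ∈ {0, …, m−1} is (1/2) ∑_{i=1}^{d−1} (s_{i+1}/s_i − 1). -/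
/-- Greedy digit-sum function: `Fc s e n` is the greedy coin count of `n`
with denominations `s 0, …, s e`. -/
def Fc (s : ℕ → ℕ) : ℕ → ℕ → ℕ
  | 0, n => n
  | e + 1, n => n / s (e + 1) + Fc s e (n % s (e + 1))

lemma Fc_zero (s : ℕ → ℕ) (e : ℕ) : Fc s e 0 = 0 := by
  induction e with
  | zero => rfl
  | succ e ih => simp [Fc, ih]

lemma Fc_of_lt (s : ℕ → ℕ) {e n : ℕ} (h : n < s (e + 1)) :
    Fc s (e + 1) n = Fc s e n := by
  simp [Fc, Nat.div_eq_of_lt h, Nat.mod_eq_of_lt h]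

lemma Fc_add_self (s : ℕ → ℕ) (hs0 : s 0 = 1) {e : ℕ} (hse : 0 < s e) (r : ℕ) :
    Fc s e (s e + r) = 1 + Fc s e r := by
  cases e with
  | zero => simp [Fc, hs0, Nat.add_comm]
  | succ e =>
      simp only [Fc]
      rw [Nat.add_comm (s (e+1)) r, Nat.add_div_right _ hse, Nat.add_mod_right]
      omega

lemma Fc_mul_add (s : ℕ → ℕ) (hs0 : s 0 = 1) {e : ℕ} (hse : 0 < s e) (k r : ℕ) :
    Fc s e (k * s e + r) = k + Fc s e r := by
  induction k with
  | zero => simp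
  | succ k ih =>
      have : (k + 1) * s e + r = s e + (k * s e + r) := by ring
      rw [this, Fc_add_self s hs0 hse, ih]
      omega

lemma s_pos (s : ℕ → ℕ) (hs0 : s 0 = 1) {e : ℕ}
    (hch : ∀ i, i < e → ∃ k, 0 < k ∧ s (i + 1) = k * s i) :
    ∀ i, i ≤ e → 0 < s i := by
  intro i hi
  induction i with
  | zero => omega
  | succ i ih =>
      obtain ⟨k, hk, hsk⟩ := hch i (by omega)
      have := ih (by omega)
      rw [hsk]; exact Nat.mul_pos hk this

lemma s_mono (s : ℕ → ℕ) {e : ℕ}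
    (hch : ∀ i, i < e → ∃ k, 0 < k ∧ s (i + 1) = k * s i) :
    ∀ i j, i ≤ j → j ≤ e → s i ≤ s j := by
  intro i j hij hje
  induction j with
  | zero => have : i = 0 := by omega
            subst this; rfl
  | succ j ih =>
      rcases Nat.lt_or_ge i (j+1) with h | h
      · obtain ⟨k, hk, hsk⟩ := hch j (by omega)
        have h1 : s i ≤ s j := ih (by omega) (by omega)
        have : s j ≤ k * s j := Nat.le_mul_of_pos_left _ hk
        omega
      · have : i = j + 1 := by omega
        subst this; rfl

lemma Fc_subadd (s : ℕ → ℕ) (hs0 : s 0 = 1) {e : ℕ}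
    (hch : ∀ i, i < e → ∃ k, 0 < k ∧ s (i + 1) = k * s i) :
    ∀ x y, Fc s e (x + y) ≤ Fc s e x + Fc s e y := by
  induction e with
  | zero => intro x y; simp [Fc]
  | succ e ih =>
      have hch' : ∀ i, i < e → ∃ k, 0 < k ∧ s (i + 1) = k * s i :=
        fun i hi => hch i (by omega)
      have ihe := ih hch'
      intro x y
      obtain ⟨k, hk, hsk⟩ := hch e (by omega)
      have hse : 0 < s e := s_pos s hs0 hch' e le_rfl
      have ht : 0 < s (e+1) := by rw [hsk]; exact Nat.mul_pos hk hse
      simp only [Fc]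
      rw [Nat.add_div ht, Nat.add_mod]
      have hu : x % s (e+1) < s (e+1) := Nat.mod_lt _ ht
      have hv : y % s (e+1) < s (e+1) := Nat.mod_lt _ ht
      rcases Nat.lt_or_ge (x % s (e+1) + y % s (e+1)) (s (e+1)) with h | h
      · rw [if_neg (by omega), Nat.mod_eq_of_lt h]
        have := ihe (x % s (e+1)) (y % s (e+1))
        omega
      · rw [if_pos (by omega)]
        obtain ⟨w, hw⟩ : ∃ w, x % s (e+1) + y % s (e+1) = s (e+1) + w :=
          ⟨x % s (e+1) + y % s (e+1) - s (e+1), by omega⟩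
        rw [hw, Nat.add_mod_left, Nat.mod_eq_of_lt (by omega)]
        have h1 : Fc s e (x % s (e+1) + y % s (e+1)) ≤ Fc s e (x % s (e+1)) + Fc s e (y % s (e+1)) :=
          ihe _ _
        have h2 : Fc s e (s (e+1) + w) = k + Fc s e w := by
          rw [hsk]; exact Fc_mul_add s hs0 hse k w
        rw [hw] at h1
        omega

lemma Fc_denom (s : ℕ → ℕ) (hs0 : s 0 = 1) {e : ℕ}
    (hch : ∀ i, i < e → ∃ k, 0 < k ∧ s (i + 1) = k * s i) :
    ∀ i, i ≤ e → Fc s e (s i) ≤ 1 := by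
  induction e with
  | zero => intro i hi
            have : i = 0 := by omega
            subst this; simp [Fc, hs0]
  | succ e ih =>
      have hch' : ∀ i, i < e → ∃ k, 0 < k ∧ s (i + 1) = k * s i :=
        fun i hi => hch i (by omega)
      intro i hi
      have ht : 0 < s (e + 1) := s_pos s hs0 hch (e+1) le_rfl
      rcases Nat.lt_or_ge (s i) (s (e+1)) with h | h
      · rw [Fc_of_lt s h]
        have hie : i ≤ e := by
          rcases Nat.lt_or_ge i (e+1) with h' | h'
          · omega
          · exfalso; have : i = e + 1 := by omega
            subst this; omega
        exact ih hch' i hie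
      · have hle : s i ≤ s (e+1) := s_mono s hch i (e+1) hi le_rfl
        have heq : s i = s (e+1) := by omega
        rw [heq]
        simp [Fc, Nat.div_self ht, Nat.mod_self, Fc_zero]

lemma Fc_finsum_le (s : ℕ → ℕ) (hs0 : s 0 = 1) {e : ℕ}
    (hch : ∀ i, i < e → ∃ k, 0 < k ∧ s (i + 1) = k * s i)
    {ι : Type*} (t : Finset ι) (g : ι → ℕ) :
    Fc s e (∑ i ∈ t, g i) ≤ ∑ i ∈ t, Fc s e (g i) := by
  classical
  induction t using Finset.induction_on with
  | empty => simp [Fc_zero]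
  | insert _ _ hnotmem ih =>
      rw [Finset.sum_insert hnotmem, Finset.sum_insert hnotmem]
      calc Fc s e (g _ + _) ≤ Fc s e (g _) + Fc s e _ := Fc_subadd s hs0 hch _ _
        _ ≤ _ := by exact Nat.add_le_add_left ih _

lemma Fc_le_count (s : ℕ → ℕ) (hs0 : s 0 = 1) {e : ℕ}
    (hch : ∀ i, i < e → ∃ k, 0 < k ∧ s (i + 1) = k * s i)
    (a : Fin (e + 1) → ℕ) :
    Fc s e (∑ i : Fin (e + 1), a i * s (i : ℕ)) ≤ ∑ i : Fin (e + 1), a i := by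
  calc Fc s e (∑ i : Fin (e + 1), a i * s (i : ℕ))
      ≤ ∑ i : Fin (e + 1), Fc s e (a i * s (i : ℕ)) :=
        Fc_finsum_le s hs0 hch _ _
    _ ≤ ∑ i : Fin (e + 1), a i := by
        apply Finset.sum_le_sum
        intro i _
        have h1 : Fc s e (a i * s (i : ℕ)) ≤ a i * Fc s e (s (i : ℕ)) := by
          induction (a i) with
          | zero => simp [Fc_zero]
          | succ b ihb =>
              have : (b + 1) * s (i:ℕ) = s (i:ℕ) + b * s (i:ℕ) := by ring
              rw [this]
              calc Fc s e _ ≤ Fc s e (s (i:ℕ)) + Fc s e (b * s (i:ℕ)) :=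
                    Fc_subadd s hs0 hch _ _
                _ ≤ Fc s e (s (i:ℕ)) + b * Fc s e (s (i:ℕ)) := Nat.add_le_add_left ihb _
                _ = (b+1) * Fc s e (s (i:ℕ)) := by ring
        have h2 : Fc s e (s (i : ℕ)) ≤ 1 := Fc_denom s hs0 hch i (by omega)
        calc Fc s e (a i * s (i:ℕ)) ≤ a i * Fc s e (s (i:ℕ)) := h1
          _ ≤ a i * 1 := Nat.mul_le_mul_left _ h2
          _ = a i := Nat.mul_one _

/-- The minimal coin count of `n` with the `d` denominations `s 0, …, s (d-1)`. -/
noncomputable def minCoinCount (d : ℕ) (s : ℕ → ℕ) (n : ℕ) : ℕ :=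
  sInf {k : ℕ | ∃ a : Fin d → ℕ,
    (∑ i : Fin d, a i * s (i : ℕ)) = n ∧ (∑ i : Fin d, a i) = k}

lemma Fc_rep (s : ℕ → ℕ) (hs0 : s 0 = 1) (e : ℕ) (n : ℕ) :
    ∃ a : Fin (e + 1) → ℕ,
      (∑ i : Fin (e + 1), a i * s (i : ℕ)) = n ∧ (∑ i : Fin (e + 1), a i) = Fc s e n := by
  induction e generalizing n with
  | zero =>
      exact ⟨fun _ => n, by simp [Fin.sum_univ_one, hs0, Fc], by simp [Fin.sum_univ_one, Fc]⟩
  | succ e ih =>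
      obtain ⟨b, hb1, hb2⟩ := ih (n % s (e + 1))
      refine ⟨Fin.snoc b (n / s (e + 1)), ?_, ?_⟩
      · rw [Fin.sum_univ_castSucc]
        simp only [Fin.snoc_castSucc, Fin.snoc_last, Fin.coe_castSucc, Fin.val_last]
        rw [hb1, Nat.mod_add_div']
      · rw [Fin.sum_univ_castSucc]
        simp only [Fin.snoc_castSucc, Fin.snoc_last]
        rw [hb2]
        simp [Fc, Nat.add_comm]

lemma minCoin_eq_Fc (s : ℕ → ℕ) (hs0 : s 0 = 1) {e : ℕ}
    (hch : ∀ i, i < e → ∃ k, 0 < k ∧ s (i + 1) = k * s i) (n : ℕ) :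
    minCoinCount (e + 1) s n = Fc s e n := by
  obtain ⟨a, ha1, ha2⟩ := Fc_rep s hs0 e n
  apply le_antisymm
  · exact Nat.sInf_le ⟨a, ha1, ha2⟩
  · unfold minCoinCount
    refine le_csInf ⟨∑ i : Fin (e + 1), a i, ⟨a, ha1, rfl⟩⟩ ?_
    rintro k ⟨b, hb1, hb2⟩
    rw [← hb2, ← hb1]
    exact Fc_le_count s hs0 hch b

lemma sum_range_mul_split (f : ℕ → ℕ) (k m : ℕ) :
    ∑ n ∈ Finset.range (k * m), f n
      = ∑ j ∈ Finset.range k, ∑ t ∈ Finset.range m, f (j * m + t) := by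
  induction k with
  | zero => simp
  | succ k ih =>
      rw [Finset.sum_range_succ, ← ih, Nat.succ_mul, Finset.sum_range_add]

lemma Fc_total (s : ℕ → ℕ) (hs0 : s 0 = 1) {e : ℕ}
    (hch : ∀ i, i < e → ∃ k, 0 < k ∧ s (i + 1) = k * s i) :
    2 * ∑ n ∈ Finset.range (s e), Fc s e n
      = s e * ∑ i ∈ Finset.range e, (s (i + 1) / s i - 1) := by
  induction e with
  | zero => simp [hs0, Fc]
  | succ e ih =>
      have hch' : ∀ i, i < e → ∃ k, 0 < k ∧ s (i + 1) = k * s i :=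
        fun i hi => hch i (by omega)
      obtain ⟨k, hk, hsk⟩ := hch e (by omega)
      have hse : 0 < s e := s_pos s hs0 hch' e le_rfl
      have h1 : ∑ n ∈ Finset.range (s (e+1)), Fc s (e+1) n
          = ∑ n ∈ Finset.range (s (e+1)), Fc s e n :=
        Finset.sum_congr rfl (fun n hn => Fc_of_lt s (Finset.mem_range.mp hn))
      rw [h1, hsk, sum_range_mul_split]
      have h2 : ∀ j ∈ Finset.range k, ∑ t ∈ Finset.range (s e), Fc s e (j * s e + t)
          = s e * j + ∑ t ∈ Finset.range (s e), Fc s e t := by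
        intro j _
        rw [Finset.sum_congr rfl (fun t _ => Fc_mul_add s hs0 hse j t),
          Finset.sum_add_distrib, Finset.sum_const, Finset.card_range, smul_eq_mul]
      rw [Finset.sum_congr rfl h2, Finset.sum_add_distrib, ← Finset.mul_sum,
        Finset.sum_const, Finset.card_range, smul_eq_mul]
      have hgauss : (∑ j ∈ Finset.range k, j) * 2 = k * (k - 1) :=
        Finset.sum_range_id_mul_two k
      have hq : s (e + 1) / s e = k := by
        rw [hsk, Nat.mul_div_cancel _ hse]
      rw [Finset.sum_range_succ, hq]
      have := ih hch'
      set P := ∑ i ∈ Finset.range e, (s (i + 1) / s i - 1)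
      set G := ∑ t ∈ Finset.range (s e), Fc s e t
      set J := ∑ j ∈ Finset.range k, j
      have hc : k * (k - 1) = J * 2 := hgauss.symm
      calc 2 * (s e * J + k * G) = s e * (J * 2) + k * (2 * G) := by ring
        _ = s e * (k * (k-1)) + k * (s e * P) := by rw [← hc, this]
        _ = k * s e * (P + (k - 1)) := by ring

/-- Total coin usage over one period for a divisor chain (`0`-based indexing):
with `m = s (d-1)` and `q i = s (i+1) / s i`,
`2 · ∑_{n<m} r(n) = m · ∑_{i<d-1} (q i − 1)`. -/
theorem total_coin_usage_divisor_chain (d : ℕ) (s : ℕ → ℕ) (hd : 1 ≤ d)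
    (hs0 : s 0 = 1)
    (hchain : ∀ i, i + 1 < d → ∃ k, 0 < k ∧ s (i + 1) = k * s i) :
    2 * ∑ n ∈ Finset.range (s (d - 1)), minCoinCount d s n =
      s (d - 1) * ∑ i ∈ Finset.range (d - 1), (s (i + 1) / s i - 1) := by
  obtain ⟨e, rfl⟩ : ∃ e, d = e + 1 := ⟨d - 1, by omega⟩
  have hch : ∀ i, i < e → ∃ k, 0 < k ∧ s (i + 1) = k * s i :=
    fun i hi => hchain i (by omega)
  simp only [Nat.add_sub_cancel]
  rw [Finset.sum_congr rfl (fun n _ => minCoin_eq_Fc s hs0 hch n)]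
  exact Fc_total s hs0 hch
end

section
/- Parameter efficiency of the DilatedRNN (paper's Theorem 1, combinatorial form): fix integers d ≥ 2 and M ≥ 1, and set m = M^{d−1}. Let s_1 = 1 and s_{i+1} = n_{i+1} · s_i for positive integers n_2, …, n_d with s_d = m. Then ∑_{n=0}^{m−1} r_s(n) ≥ ∑_{n=0}^{m−1} r_geom(n), where r_s(n) is the minimal coin count of n with denominations (s_1, …, s_d) and r_geom(n) is the minimal coin count of n with the geometric denominations (M^0, M^1, …, M^{d−1}). Equivalently, 2 · ∑_{n=0}^{m−1} r_s(n) ≥ m · (d−1) · (M−1), and the geometric chain attains this bound; i.e., among all divisor chains with s_1 = 1 and s_d = M^{d−1}, the exponentially increasing dilations M^0, …, M^{d−1} achieve the smallest average minimal coin count (hence the smallest mean recurrent length). -/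
open Finset

namespace DRNNaux

/-- Normalized divisor-chain hypotheses. -/
def Good (d : ℕ) (s : ℕ → ℕ) : Prop :=
  s 0 = 1 ∧ (∀ i, i < d → 0 < s i) ∧ ∀ i, i + 1 < d → s (i + 1) = (s (i + 1) / s i) * s i

/-- The "correction" function: digit sum of `n` equals `n - Ecoin d s n`. -/
def Ecoin (d : ℕ) (s : ℕ → ℕ) (n : ℕ) : ℕ :=
  ∑ i ∈ Finset.Ico 1 d, (s i / s (i - 1) - 1) * (n / s i)

variable {d : ℕ} {s : ℕ → ℕ}

lemma kpos (h : Good d s) {i : ℕ} (hi : i + 1 < d) : 1 ≤ s (i + 1) / s i := by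
  have h1 := h.2.1 (i + 1) hi
  have h2 := h.2.2 i hi
  rcases Nat.eq_zero_or_pos (s (i + 1) / s i) with h0 | h0
  · rw [h0] at h2; simp at h2; omega
  · omega

lemma sdvd (h : Good d s) : ∀ j, j < d → ∀ i, i ≤ j → s i ∣ s j := by
  intro j
  induction j with
  | zero => intro _ i hi; interval_cases i; exact dvd_refl _
  | succ j ih =>
    intro hj i hi
    rcases Nat.lt_or_ge i (j + 1) with hlt | hge
    · have h1 : s i ∣ s j := ih (by omega) i (by omega)
      have h2 : s j ∣ s (j + 1) := ⟨s (j + 1) / s j, by rw [mul_comm]; exact h.2.2 j hj⟩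
      exact dvd_trans h1 h2
    · have : i = j + 1 := by omega
      rw [this]

/-- Telescoping: `∑_{1 ≤ i ≤ j} (k_{i-1} - 1) (s j / s i) + 1 = s j`. -/
lemma teles (h : Good d s) : ∀ j, j < d →
    (∑ i ∈ Finset.Ico 1 (j + 1), (s i / s (i - 1) - 1) * (s j / s i)) + 1 = s j := by
  intro j
  induction j with
  | zero => intro _; simp [h.1]
  | succ j ih =>
    intro hj1
    have hj : j < d := by omega
    have hmul := h.2.2 j hj1
    have hkp := kpos h hj1
    have hsj1pos := h.2.1 (j + 1) hj1
    have hself : s (j + 1) / s (j + 1) = 1 := Nat.div_self hsj1pos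
    rw [Finset.sum_Ico_succ_top (by omega)]
    have hterm : ∀ i ∈ Finset.Ico 1 (j + 1), (s i / s (i - 1) - 1) * (s (j + 1) / s i)
        = (s (j + 1) / s j) * ((s i / s (i - 1) - 1) * (s j / s i)) := by
      intro i hi
      simp only [Finset.mem_Ico] at hi
      have hdvd : s i ∣ s j := sdvd h j hj i (by omega)
      have hq : s (j + 1) / s i = (s (j + 1) / s j) * (s j / s i) := by
        conv_lhs => rw [hmul]
        exact Nat.mul_div_assoc _ hdvd
      rw [hq]; ring
    rw [Finset.sum_congr rfl hterm, ← Finset.mul_sum, hself]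
    simp only [Nat.add_sub_cancel]
    have ihj := ih hj
    set K := s (j + 1) / s j
    set Sig1 := ∑ i ∈ Finset.Ico 1 (j + 1), (s i / s (i - 1) - 1) * (s j / s i) with hSig
    have e1 : K * Sig1 + (K - 1) * 1 + 1 = K * Sig1 + K := by omega
    rw [e1]
    have : K * Sig1 + K = K * (Sig1 + 1) := by ring
    rw [this, ihj, ← hmul]

/-- Adding one coin `s j` increases `Ecoin` by at least `s j - 1`. -/
lemma Estep (h : Good d s) {j : ℕ} (hj : j < d) (x : ℕ) :
    Ecoin d s x + s j ≤ Ecoin d s (x + s j) + 1 := by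
  have hsplit : ∀ y : ℕ, Ecoin d s y =
      (∑ i ∈ Finset.Ico 1 (j + 1), (s i / s (i - 1) - 1) * (y / s i)) +
      (∑ i ∈ Finset.Ico (j + 1) d, (s i / s (i - 1) - 1) * (y / s i)) := by
    intro y
    rw [Ecoin, ← Finset.sum_Ico_consecutive _ (by omega : 1 ≤ j + 1) (by omega : j + 1 ≤ d)]
  rw [hsplit x, hsplit (x + s j)]
  have h1 : ∀ i ∈ Finset.Ico 1 (j + 1), (s i / s (i - 1) - 1) * ((x + s j) / s i)
      = (s i / s (i - 1) - 1) * (x / s i) + (s i / s (i - 1) - 1) * (s j / s i) := by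
    intro i hi
    simp only [Finset.mem_Ico] at hi
    have hdvd : s i ∣ s j := sdvd h j hj i (by omega)
    have hpos : 0 < s i := h.2.1 i (by omega)
    have hdiv := Nat.add_mul_div_right x (s j / s i) hpos
    rw [Nat.div_mul_cancel hdvd] at hdiv
    rw [hdiv]; ring
  rw [Finset.sum_congr rfl h1, Finset.sum_add_distrib]
  have h2 : (∑ i ∈ Finset.Ico (j + 1) d, (s i / s (i - 1) - 1) * (x / s i)) ≤
      ∑ i ∈ Finset.Ico (j + 1) d, (s i / s (i - 1) - 1) * ((x + s j) / s i) :=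
    Finset.sum_le_sum fun i _ =>
      Nat.mul_le_mul_left _ (Nat.div_le_div_right (Nat.le_add_right _ _))
  have h3 := teles h j hj
  omega

/-- Any representation with `c` coins represents a number `n ≤ c + Ecoin n`. -/
lemma lower (h : Good d s) :
    ∀ c (a : Fin d → ℕ), (∑ i, a i) = c →
      (∑ i : Fin d, a i * s (i : ℕ)) ≤ c + Ecoin d s (∑ i : Fin d, a i * s (i : ℕ)) := by
  intro c
  induction c using Nat.strong_induction_on with
  | _ c ih =>
    intro a hc
    rcases Nat.eq_zero_or_pos c with h0 | h0
    · subst h0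
      have hz : ∀ i ∈ Finset.univ (α := Fin d), a i = 0 := by
        intro i _
        by_contra hne
        have h1 : 1 ≤ a i := by omega
        have := Finset.single_le_sum (f := a) (fun i _ => Nat.zero_le _) (Finset.mem_univ i)
        omega
      have : (∑ i : Fin d, a i * s (i : ℕ)) = 0 :=
        Finset.sum_eq_zero fun i hi => by rw [hz i hi, Nat.zero_mul]
      omega
    · have hex : ∃ j, a j ≠ 0 := by
        by_contra hno
        push_neg at hno
        have : (∑ i, a i) = 0 := Finset.sum_eq_zero fun i _ => hno i
        omega
      obtain ⟨j, hj⟩ := hex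
      set a' := Function.update a j (a j - 1) with ha'
      have e1 := Finset.add_sum_erase Finset.univ (fun i => a' i * s (i : ℕ)) (Finset.mem_univ j)
      have e2 := Finset.add_sum_erase Finset.univ (fun i => a i * s (i : ℕ)) (Finset.mem_univ j)
      have e3 : (∑ i ∈ Finset.univ.erase j, a' i * s (i : ℕ))
          = ∑ i ∈ Finset.univ.erase j, a i * s (i : ℕ) :=
        Finset.sum_congr rfl fun i hi => by
          rw [ha', Function.update_of_ne (Finset.ne_of_mem_erase hi)]
      have e4 : a' j = a j - 1 := Function.update_self _ _ _
      have e5 := Finset.add_sum_erase Finset.univ (fun i => a' i) (Finset.mem_univ j)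
      have e6 := Finset.add_sum_erase Finset.univ (fun i => a i) (Finset.mem_univ j)
      have e7 : (∑ i ∈ Finset.univ.erase j, a' i) = ∑ i ∈ Finset.univ.erase j, a i :=
        Finset.sum_congr rfl fun i hi => by
          rw [ha', Function.update_of_ne (Finset.ne_of_mem_erase hi)]
      have haj : a j - 1 + 1 = a j := by omega
      have hmulid : (a j - 1) * s (j : ℕ) + s (j : ℕ) = a j * s (j : ℕ) := by
        calc (a j - 1) * s (j : ℕ) + s (j : ℕ) = ((a j - 1) + 1) * s (j : ℕ) := by ring
        _ = a j * s (j : ℕ) := by rw [haj]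
      have hcoins : (∑ i : Fin d, a' i * s (i : ℕ)) + s (j : ℕ)
          = ∑ i : Fin d, a i * s (i : ℕ) := by
        rw [e4] at e1
        rw [e3] at e1
        omega
      have hcount : (∑ i : Fin d, a' i) + 1 = c := by
        rw [e4] at e5
        rw [e7] at e5
        omega
      have hih := ih (c - 1) (by omega) a' (by omega)
      have hstep := Estep h (j.isLt) (∑ i : Fin d, a' i * s (i : ℕ))
      rw [hcoins] at hstep
      omega

/-- Lower bound: `n ≤ r_s(n) + Ecoin n`. -/
lemma min_lower (h : Good d s) (hd : 1 ≤ d) (n : ℕ) :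
    n ≤ minCoinCount d s n + Ecoin d s n := by
  set S := {k : ℕ | ∃ a : Fin d → ℕ,
    (∑ i : Fin d, a i * s (i : ℕ)) = n ∧ (∑ i : Fin d, a i) = k} with hS
  have hwit : ∀ (f : Fin d → ℕ), f = (fun i => if i = (⟨0, by omega⟩ : Fin d) then n else 0) →
      (∑ i : Fin d, f i * s (i : ℕ)) = n ∧ (∑ i : Fin d, f i) = n := by
    intro f hf
    constructor
    · rw [Finset.sum_eq_single (⟨0, by omega⟩ : Fin d)]
      · simp [hf, h.1]
      · intro b _ hb; simp [hf, hb]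
      · simp
    · rw [Finset.sum_eq_single (⟨0, by omega⟩ : Fin d)]
      · simp [hf]
      · intro b _ hb; simp [hf, hb]
      · simp
  have hne : S.Nonempty := ⟨n, ⟨_, hwit _ rfl⟩⟩
  have hmem : minCoinCount d s n ∈ S := Nat.sInf_mem hne
  obtain ⟨a, ha1, ha2⟩ := hmem
  have := lower h (minCoinCount d s n) a ha2
  rw [ha1] at this
  exact this

/-- Telescoping reconstruction of `n % s t` from digits. -/
lemma digits_mod (h : Good d s) (n : ℕ) : ∀ t, t ≤ d - 1 →
    (∑ i ∈ Finset.range t, ((n % s (i + 1)) / s i) * s i) = n % s t := by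
  intro t
  induction t with
  | zero => intro _; simp [h.1, Nat.mod_one]
  | succ t iht =>
    intro ht
    have ht' : t + 1 < d := by omega
    rw [Finset.sum_range_succ, iht (by omega)]
    have hdvd : s t ∣ s (t + 1) := ⟨s (t + 1) / s t, by rw [mul_comm]; exact h.2.2 t ht'⟩
    have hmm : n % s t = (n % s (t + 1)) % s t := (Nat.mod_mod_of_dvd n hdvd).symm
    rw [hmm]
    exact Nat.mod_add_div' _ _

/-- Digit-sum identity: digits + Ecoin + top quotient = n. -/
lemma digits_count (h : Good d s) (n : ℕ) : ∀ t, t ≤ d - 1 →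
    (∑ i ∈ Finset.range t, (n % s (i + 1)) / s i)
      + (∑ i ∈ Finset.Ico 1 (t + 1), (s i / s (i - 1) - 1) * (n / s i))
      + n / s t = n := by
  intro t
  induction t with
  | zero => intro _; simp [h.1]
  | succ t iht =>
    intro ht
    have ht' : t + 1 < d := by omega
    have hst : 0 < s t := h.2.1 t (by omega)
    have hmul := h.2.2 t ht'
    have hkp := kpos h ht'
    set K := s (t + 1) / s t with hK
    set q := n / s (t + 1) with hq
    set r := n % s (t + 1) with hr
    have hfact : n / s t = K * q + r / s t := by
      have hdm : s (t + 1) * q + r = n := Nat.div_add_mod n (s (t + 1))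
      have : n = s t * (K * q) + r := by
        rw [← hdm, hmul]; ring
      rw [this, Nat.mul_add_div hst]
    rw [Finset.sum_range_succ, Finset.sum_Ico_succ_top (by omega : 1 ≤ t + 1)]
    simp only [Nat.add_sub_cancel]
    have iht' := iht (by omega)
    have hKq : (K - 1) * q + q = K * q := by
      have : q ≤ K * q := Nat.le_mul_of_pos_left q (by omega)
      rw [Nat.sub_one_mul]
      omega
    rw [← hK, ← hq, ← hr]
    omega

/-- Upper bound: `r_s(n) + Ecoin n ≤ n` via the greedy representation. -/
lemma min_upper (h : Good d s) (hd : 1 ≤ d) (n : ℕ) :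
    minCoinCount d s n + Ecoin d s n ≤ n := by
  set a : Fin d → ℕ := fun i =>
    if (i : ℕ) + 1 < d then (n % s ((i : ℕ) + 1)) / s (i : ℕ) else n / s (i : ℕ) with ha
  obtain ⟨e, he⟩ : ∃ e, d = e + 1 := ⟨d - 1, by omega⟩
  have hed : e = d - 1 := by omega
  have hsum1 : (∑ i : Fin d, a i * s (i : ℕ)) = n := by
    rw [Fin.sum_univ_eq_sum_range (fun j => (if j + 1 < d then (n % s (j + 1)) / s j else n / s j) * s j) d]
    rw [he, Finset.sum_range_succ]
    have hmain : ∀ j ∈ Finset.range e,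
        (if j + 1 < e + 1 then (n % s (j + 1)) / s j else n / s j) * s j
          = ((n % s (j + 1)) / s j) * s j := by
      intro j hj
      simp only [Finset.mem_range] at hj
      rw [if_pos (by omega)]
    rw [Finset.sum_congr rfl hmain, digits_mod h n e (by omega), if_neg (by omega)]
    exact Nat.mod_add_div' n (s e)
  have hsum2 : (∑ i : Fin d, a i) + Ecoin d s n = n := by
    have h2 : (∑ i : Fin d, a i)
        = (∑ j ∈ Finset.range e, (n % s (j + 1)) / s j) + n / s e := by
      rw [Fin.sum_univ_eq_sum_range (fun j => if j + 1 < d then (n % s (j + 1)) / s j else n / s j) d]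
      rw [he, Finset.sum_range_succ, if_neg (by omega)]
      congr 1
      apply Finset.sum_congr rfl
      intro j hj
      simp only [Finset.mem_range] at hj
      rw [if_pos (by omega)]
    have h3 := digits_count h n e (by omega)
    have hee : e + 1 = d := by omega
    rw [hee] at h3
    rw [h2, Ecoin]
    omega
  have hmem : (∑ i : Fin d, a i) ∈ {k : ℕ | ∃ b : Fin d → ℕ,
      (∑ i : Fin d, b i * s (i : ℕ)) = n ∧ (∑ i : Fin d, b i) = k} := ⟨a, hsum1, rfl⟩
  have hle : minCoinCount d s n ≤ ∑ i : Fin d, a i := Nat.sInf_le hmem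
  omega

/-- Exact value of the minimal coin count for a divisor chain. -/
lemma minCoin_exact (h : Good d s) (hd : 1 ≤ d) (n : ℕ) :
    minCoinCount d s n + Ecoin d s n = n :=
  le_antisymm (min_upper h hd n) (min_lower h hd n)

/-- `2 ∑_{n < q t} ⌊n/t⌋ + q t = t q²`. -/
lemma sum_div (t : ℕ) (ht : 0 < t) : ∀ q : ℕ,
    2 * (∑ n ∈ Finset.range (q * t), n / t) + q * t = t * q * q := by
  intro q
  induction q with
  | zero => simp
  | succ q ih =>
    have hqt : (q + 1) * t = q * t + t := by ring
    rw [hqt, Finset.range_eq_Ico, ← Finset.sum_Ico_consecutive _ (Nat.zero_le (q * t)) (Nat.le_add_right _ _)]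
    have hconst : ∀ n ∈ Finset.Ico (q * t) (q * t + t), n / t = q := by
      intro n hn
      simp only [Finset.mem_Ico] at hn
      exact Nat.div_eq_of_lt_le (by omega) (by rw [Nat.succ_mul]; omega)
    rw [Finset.sum_congr rfl hconst, Finset.sum_const, Nat.card_Ico]
    rw [← Finset.range_eq_Ico]
    have hcard : q * t + t - q * t = t := by omega
    rw [hcard]
    have hgoal : t * (q + 1) * (q + 1) = t * q * q + 2 * (t • q) + t := by
      simp only [smul_eq_mul]; ring
    rw [hgoal]
    omega

/-- Total of `Ecoin` over one period. -/
lemma sum_E (h : Good d s) (hd : 1 ≤ d) :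
    2 * (∑ n ∈ Finset.range (s (d - 1)), Ecoin d s n)
      + s (d - 1) * (∑ i ∈ Finset.Ico 1 d, (s i / s (i - 1) - 1)) + s (d - 1)
      = s (d - 1) * s (d - 1) := by
  set m := s (d - 1) with hm
  have hmd : d - 1 < d := by omega
  have hmpos : 0 < m := h.2.1 (d - 1) hmd
  have hswap : (∑ n ∈ Finset.range m, Ecoin d s n)
      = ∑ i ∈ Finset.Ico 1 d, (s i / s (i - 1) - 1) * (∑ n ∈ Finset.range m, n / s i) := by
    simp only [Ecoin]
    rw [Finset.sum_comm (f := fun n i => (s i / s (i - 1) - 1) * (n / s i))]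
    exact Finset.sum_congr rfl fun i _ => (Finset.mul_sum _ _ _).symm
  have hper : ∀ i ∈ Finset.Ico 1 d,
      2 * ((s i / s (i - 1) - 1) * (∑ n ∈ Finset.range m, n / s i))
        + (s i / s (i - 1) - 1) * m
      = (s i / s (i - 1) - 1) * (m * (m / s i)) := by
    intro i hi
    simp only [Finset.mem_Ico] at hi
    have hpos : 0 < s i := h.2.1 i hi.2
    have hdvd : s i ∣ m := sdvd h (d - 1) hmd i (by omega)
    have hqm : m / s i * s i = m := Nat.div_mul_cancel hdvd
    have hsd := sum_div (s i) hpos (m / s i)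
    rw [hqm] at hsd
    have : s i * (m / s i) * (m / s i) = m * (m / s i) := by
      rw [mul_comm (s i) (m / s i), hqm]
    rw [this] at hsd
    calc 2 * ((s i / s (i - 1) - 1) * (∑ n ∈ Finset.range m, n / s i))
          + (s i / s (i - 1) - 1) * m
        = (s i / s (i - 1) - 1) * (2 * (∑ n ∈ Finset.range m, n / s i) + m) := by ring
      _ = (s i / s (i - 1) - 1) * (m * (m / s i)) := by rw [hsd]
  have htel := teles h (d - 1) hmd
  have hde : d - 1 + 1 = d := by omega
  rw [hde] at htel
  rw [← hm] at htel
  have hkey : (∑ i ∈ Finset.Ico 1 d, (2 * ((s i / s (i - 1) - 1) * (∑ n ∈ Finset.range m, n / s i))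
        + (s i / s (i - 1) - 1) * m))
      = ∑ i ∈ Finset.Ico 1 d, (s i / s (i - 1) - 1) * (m * (m / s i)) :=
    Finset.sum_congr rfl hper
  rw [Finset.sum_add_distrib] at hkey
  have hL1 : (∑ i ∈ Finset.Ico 1 d, 2 * ((s i / s (i - 1) - 1) * (∑ n ∈ Finset.range m, n / s i)))
      = 2 * ∑ i ∈ Finset.Ico 1 d, (s i / s (i - 1) - 1) * (∑ n ∈ Finset.range m, n / s i) :=
    (Finset.mul_sum _ _ _).symm
  have hL2 : (∑ i ∈ Finset.Ico 1 d, (s i / s (i - 1) - 1) * m)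
      = (∑ i ∈ Finset.Ico 1 d, (s i / s (i - 1) - 1)) * m := (Finset.sum_mul _ _ _).symm
  have hR : (∑ i ∈ Finset.Ico 1 d, (s i / s (i - 1) - 1) * (m * (m / s i)))
      = m * ∑ i ∈ Finset.Ico 1 d, (s i / s (i - 1) - 1) * (m / s i) := by
    rw [Finset.mul_sum]
    exact Finset.sum_congr rfl fun i _ => by ring
  rw [hL1, hL2, hR] at hkey
  rw [hswap]
  have hfin : m * (∑ i ∈ Finset.Ico 1 d, (s i / s (i - 1) - 1) * (m / s i)) + m = m * m := by
    set T := ∑ i ∈ Finset.Ico 1 d, (s i / s (i - 1) - 1) * (m / s i) with hT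
    calc m * T + m = m * (T + 1) := by ring
      _ = m * m := by rw [htel]
  set A := ∑ i ∈ Finset.Ico 1 d, (s i / s (i - 1) - 1) * (∑ n ∈ Finset.range m, n / s i)
  set W := ∑ i ∈ Finset.Ico 1 d, (s i / s (i - 1) - 1)
  have hcomm : W * m = m * W := Nat.mul_comm _ _
  omega

/-- The master identity: twice the total coin count over one period. -/
lemma twice_sum (h : Good d s) (hd : 1 ≤ d) :
    2 * (∑ n ∈ Finset.range (s (d - 1)), minCoinCount d s n)
      = s (d - 1) * (∑ i ∈ Finset.Ico 1 d, (s i / s (i - 1) - 1)) := by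
  set m := s (d - 1) with hm
  have hsum : (∑ n ∈ Finset.range m, minCoinCount d s n)
      + (∑ n ∈ Finset.range m, Ecoin d s n) = ∑ n ∈ Finset.range m, n := by
    rw [← Finset.sum_add_distrib]
    exact Finset.sum_congr rfl fun n _ => minCoin_exact h hd n
  have hgauss : (∑ n ∈ Finset.range m, n) * 2 = m * (m - 1) := Finset.sum_range_id_mul_two m
  have hg2 : m * (m - 1) + m = m * m := by
    rcases m with _ | m
    · simp
    · simp only [Nat.add_sub_cancel]
      ring
  have hE := sum_E h hd
  rw [← hm] at hE
  omega

/-- AM-GM for naturals with product `M^t`. -/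
lemma amgm (t M : ℕ) (hM : 1 ≤ M) (k : ℕ → ℕ) (hk : ∀ i < t, 1 ≤ k i)
    (hprod : (∏ i ∈ Finset.range t, k i) = M ^ t) :
    t * M ≤ ∑ i ∈ Finset.range t, k i := by
  have hM0 : (0 : ℝ) < M := by exact_mod_cast hM
  have hlog : ∀ i ∈ Finset.range t, Real.log ((k i : ℝ) / M) ≤ (k i : ℝ) / M - 1 := by
    intro i hi
    simp only [Finset.mem_range] at hi
    have hki : (0 : ℝ) < k i := by exact_mod_cast hk i hi
    exact Real.log_le_sub_one_of_pos (div_pos hki hM0)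
  have hprodR : (∏ i ∈ Finset.range t, ((k i : ℝ) / M)) = 1 := by
    rw [Finset.prod_div_distrib]
    have h1 : (∏ i ∈ Finset.range t, (k i : ℝ)) = (M : ℝ) ^ t := by
      rw [← Nat.cast_prod, hprod]
      push_cast
      ring
    rw [h1, Finset.prod_const, Finset.card_range]
    field_simp
  have hlogsum : (∑ i ∈ Finset.range t, Real.log ((k i : ℝ) / M)) = 0 := by
    rw [← Real.log_prod]
    · rw [hprodR, Real.log_one]
    · intro i hi
      simp only [Finset.mem_range] at hi
      have hki : (0 : ℝ) < k i := by exact_mod_cast hk i hi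
      positivity
  have hsum : (0 : ℝ) ≤ ∑ i ∈ Finset.range t, ((k i : ℝ) / M - 1) := by
    rw [← hlogsum]
    exact Finset.sum_le_sum hlog
  rw [Finset.sum_sub_distrib, Finset.sum_const, Finset.card_range, ← Finset.sum_div] at hsum
  have hfin : (t : ℝ) * M ≤ ∑ i ∈ Finset.range t, (k i : ℝ) := by
    rw [sub_nonneg] at hsum
    calc (t : ℝ) * M = (t : ℝ) • (1 : ℝ) * M := by simp
      _ ≤ ((∑ i ∈ Finset.range t, (k i : ℝ)) / M) * M := by
          apply mul_le_mul_of_nonneg_right _ (le_of_lt hM0)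
          simpa using hsum
      _ = ∑ i ∈ Finset.range t, (k i : ℝ) := by field_simp
  exact_mod_cast hfin.trans (le_of_eq (Nat.cast_sum _ _).symm)

/-- The product of the ratios along the chain gives `s t`. -/
lemma prod_ratios (h : Good d s) : ∀ t, t < d →
    (∏ i ∈ Finset.range t, (s (i + 1) / s i)) = s t := by
  intro t
  induction t with
  | zero => intro _; simp [h.1]
  | succ t ih =>
    intro ht
    rw [Finset.prod_range_succ, ih (by omega), mul_comm]
    exact (h.2.2 t ht).symm

/-- Normalize the chain hypotheses. -/
lemma good_of (d : ℕ) (s : ℕ → ℕ) (hs0 : s 0 = 1)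
    (hchain : ∀ i, i + 1 < d → ∃ k, 0 < k ∧ s (i + 1) = k * s i) : Good d s := by
  have hpos : ∀ i, i < d → 0 < s i := by
    intro i
    induction i with
    | zero => intro _; simp [hs0]
    | succ i ih =>
      intro hi
      obtain ⟨k, hk, he⟩ := hchain i hi
      rw [he]
      exact Nat.mul_pos hk (ih (by omega))
  refine ⟨hs0, hpos, fun i hi => ?_⟩
  obtain ⟨k, hk, he⟩ := hchain i hi
  rw [he, Nat.mul_div_cancel k (hpos i (by omega))]

/-- The geometric chain is good. -/
lemma good_geom (d M : ℕ) (hM : 1 ≤ M) : Good d (fun i => M ^ i) :=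
  good_of d _ (by simp) (fun i _ => ⟨M, by omega, by rw [pow_succ, mul_comm]⟩)

/-- The weight sum for the geometric chain. -/
lemma W_geom (d M : ℕ) (hM : 1 ≤ M) :
    (∑ i ∈ Finset.Ico 1 d, (M ^ i / M ^ (i - 1) - 1)) = (d - 1) * (M - 1) := by
  have hconst : ∀ i ∈ Finset.Ico 1 d, M ^ i / M ^ (i - 1) - 1 = M - 1 := by
    intro i hi
    simp only [Finset.mem_Ico] at hi
    rw [Nat.pow_div (by omega) (by omega)]
    have : i - (i - 1) = 1 := by omega
    rw [this, pow_one]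
  rw [Finset.sum_congr rfl hconst, Finset.sum_const, Nat.card_Ico, smul_eq_mul]

/-- AM-GM lower bound for the weight sum of an arbitrary chain ending at `M^(d-1)`. -/
lemma W_ge (d M : ℕ) (hM : 1 ≤ M) (hd : 1 ≤ d) (h : Good d s)
    (hsd : s (d - 1) = M ^ (d - 1)) :
    (d - 1) * (M - 1) ≤ ∑ i ∈ Finset.Ico 1 d, (s i / s (i - 1) - 1) := by
  have hre : (∑ i ∈ Finset.Ico 1 d, (s i / s (i - 1) - 1))
      = ∑ j ∈ Finset.range (d - 1), (s (j + 1) / s j - 1) := by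
    rw [Finset.sum_Ico_eq_sum_range]
    exact Finset.sum_congr rfl fun j _ => by
      have h1 : 1 + j = j + 1 := by omega
      rw [h1, Nat.add_sub_cancel]
  have hprod : (∏ j ∈ Finset.range (d - 1), (s (j + 1) / s j)) = M ^ (d - 1) := by
    rw [prod_ratios h (d - 1) (by omega), hsd]
  have hk1 : ∀ j < d - 1, 1 ≤ s (j + 1) / s j := fun j hj => kpos h (by omega)
  have hamgm := amgm (d - 1) M hM _ hk1 hprod
  have hsplit : (∑ j ∈ Finset.range (d - 1), (s (j + 1) / s j - 1)) + (d - 1)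
      = ∑ j ∈ Finset.range (d - 1), (s (j + 1) / s j) := by
    have : (∑ j ∈ Finset.range (d - 1), (s (j + 1) / s j - 1)) + (d - 1)
        = ∑ j ∈ Finset.range (d - 1), ((s (j + 1) / s j - 1) + 1) := by
      rw [Finset.sum_add_distrib, Finset.sum_const, Finset.card_range, smul_eq_mul, mul_one]
    rw [this]
    exact Finset.sum_congr rfl fun j hj => by
      have := hk1 j (Finset.mem_range.mp hj)
      omega
  have hmul : (d - 1) * (M - 1) + (d - 1) = (d - 1) * M := by
    have : M - 1 + 1 = M := by omega
    calc (d - 1) * (M - 1) + (d - 1) = (d - 1) * ((M - 1) + 1) := by ring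
      _ = (d - 1) * M := by rw [this]
  omega

end DRNNaux

/-- Parameter efficiency of the DilatedRNN (Theorem 1, combinatorial form,
`0`-based indexing): for any divisor chain `s 0 = 1, …, s (d-1) = m = M^(d-1)`,
the total minimal coin count over one period is at least that of the geometric
denominations `M^0, …, M^(d-1)`; explicitly
`2 · ∑_{n<m} r_s(n) ≥ m · (d-1) · (M-1)` and the geometric chain attains this
bound. -/
theorem dilatedRNN_parameter_efficiency (d M : ℕ) (hd : 2 ≤ d) (hM : 1 ≤ M)
    (s : ℕ → ℕ) (hs0 : s 0 = 1)
    (hchain : ∀ i, i + 1 < d → ∃ k, 0 < k ∧ s (i + 1) = k * s i)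
    (hsd : s (d - 1) = M ^ (d - 1)) :
    (∑ n ∈ Finset.range (M ^ (d - 1)), minCoinCount d s n ≥
        ∑ n ∈ Finset.range (M ^ (d - 1)), minCoinCount d (fun i => M ^ i) n) ∧
      (2 * ∑ n ∈ Finset.range (M ^ (d - 1)), minCoinCount d s n ≥
        M ^ (d - 1) * (d - 1) * (M - 1)) ∧
      (2 * ∑ n ∈ Finset.range (M ^ (d - 1)), minCoinCount d (fun i => M ^ i) n =
        M ^ (d - 1) * (d - 1) * (M - 1)) := by
  have hd1 : 1 ≤ d := by omega
  have hgood : DRNNaux.Good d s := DRNNaux.good_of d s hs0 hchain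
  have hgeom : DRNNaux.Good d (fun i => M ^ i) := DRNNaux.good_geom d M hM
  -- the master identity for `s`
  have hts := DRNNaux.twice_sum hgood hd1
  rw [hsd] at hts
  -- the master identity for the geometric chain
  have htg := DRNNaux.twice_sum hgeom hd1
  rw [DRNNaux.W_geom d M hM] at htg
  -- weight bound
  have hW := DRNNaux.W_ge d M hM hd1 hgood hsd
  have hWle : M ^ (d - 1) * ((d - 1) * (M - 1)) ≤
      M ^ (d - 1) * (∑ i ∈ Finset.Ico 1 d, (s i / s (i - 1) - 1)) :=
    Nat.mul_le_mul_left _ hW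
  have hassoc : M ^ (d - 1) * (d - 1) * (M - 1) = M ^ (d - 1) * ((d - 1) * (M - 1)) := by ring
  refine ⟨?_, ?_, ?_⟩
  · omega
  · omega
  · omega
end

section
/- Equality case of Theorem 1: fix integers d ≥ 2 and M ≥ 2, and set m = M^{d−1}. Let s_1 = 1 and s_{i+1} = n_{i+1} · s_i for positive integers n_2, …, n_d with s_d = m. Then ∑_{n=0}^{m−1} r_s(n) = ∑_{n=0}^{m−1} r_geom(n) holds if and only if s_i = M^{i−1} for every i, i.e. if and only if s_{i+1}/s_i = M for all 1 ≤ i ≤ d−1. Here r_s and r_geom denote minimal coin counts with denominations (s_1, …, s_d) and (M^0, …, M^{d−1}) respectively. -/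
/-- Mixed-radix digit sum with radices `L` (leftover counted as coins of the full product). -/
private def dsum : List ℕ → ℕ → ℕ
  | [], n => n
  | b :: L, n => n % b + dsum L (n / b)

private lemma dsum_nil (n : ℕ) : dsum [] n = n := rfl
private lemma dsum_cons (b : ℕ) (L : List ℕ) (n : ℕ) :
    dsum (b :: L) n = n % b + dsum L (n / b) := rfl

private lemma dsum_exists (L : List ℕ) : ∀ n : ℕ, ∃ a : Fin (L.length + 1) → ℕ,
    (∑ i : Fin (L.length + 1), a i * (L.take (i : ℕ)).prod) = n ∧
    (∑ i : Fin (L.length + 1), a i) = dsum L n := by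
  induction L with
  | nil =>
    intro n
    refine ⟨fun _ => n, ?_, ?_⟩ <;> simp [dsum_nil]
  | cons b L ih =>
    intro n
    obtain ⟨a', h1, h2⟩ := ih (n / b)
    refine ⟨Fin.cons (n % b) a', ?_, ?_⟩
    · rw [Fin.sum_univ_succ]
      simp only [Fin.cons_zero, Fin.cons_succ, Fin.val_succ, Fin.val_zero, List.take_succ_cons,
        List.take_zero, List.prod_cons, List.prod_nil, mul_one, List.length_cons]
      have hb : (∑ i : Fin (L.length + 1), a' i * (b * (L.take (i : ℕ)).prod))
          = b * ∑ i : Fin (L.length + 1), a' i * (L.take (i : ℕ)).prod := by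
        rw [Finset.mul_sum]
        exact Finset.sum_congr rfl fun i _ => by ring
      rw [hb, h1, Nat.mod_add_div]
    · rw [Fin.sum_univ_succ]
      simp only [Fin.cons_zero, Fin.cons_succ, List.length_cons]
      rw [h2, dsum_cons]

private lemma dsum_le (L : List ℕ) (hL : ∀ x ∈ L, 1 ≤ x) :
    ∀ (n : ℕ) (a : Fin (L.length + 1) → ℕ),
      (∑ i : Fin (L.length + 1), a i * (L.take (i : ℕ)).prod) = n →
      dsum L n ≤ ∑ i : Fin (L.length + 1), a i := by
  induction L with
  | nil =>
    intro n a h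
    simp only [List.take_nil, List.prod_nil, mul_one] at h
    rw [dsum_nil, ← h]
  | cons b L ih =>
    have hb : 1 ≤ b := hL b List.mem_cons_self
    have hL' : ∀ x ∈ L, 1 ≤ x := fun x hx => hL x (List.mem_cons_of_mem _ hx)
    intro n a h
    rw [Fin.sum_univ_succ] at h
    simp only [Fin.val_zero, Fin.val_succ, List.take_succ_cons, List.take_zero,
      List.prod_cons, List.prod_nil, mul_one, List.length_cons] at h
    set T := ∑ i : Fin (L.length + 1), a i.succ * (L.take (i : ℕ)).prod with hT
    have hbT : (∑ i : Fin (L.length + 1), a i.succ * (b * (L.take (i : ℕ)).prod)) = b * T := by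
      rw [hT, Finset.mul_sum]
      exact Finset.sum_congr rfl fun i _ => by ring
    rw [hbT] at h
    -- h : a 0 + b * T = n
    have hmod : n % b = a 0 % b := by rw [← h, Nat.add_mul_mod_self_left]
    have hdiv : n / b = a 0 / b + T := by rw [← h, Nat.add_mul_div_left _ _ hb]
    set a' : Fin (L.length + 1) → ℕ :=
      fun i => (if (i : ℕ) = 0 then a 0 / b else 0) + a i.succ with ha'
    have hrep : (∑ i : Fin (L.length + 1), a' i * (L.take (i : ℕ)).prod) = n / b := by
      rw [hdiv, ha']
      simp only [add_mul, Finset.sum_add_distrib]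
      congr 1
      rw [Fin.sum_univ_succ]
      simp
    have hsum' : (∑ i : Fin (L.length + 1), a' i) = a 0 / b + ∑ i : Fin (L.length + 1), a i.succ := by
      rw [ha']
      simp only [Finset.sum_add_distrib]
      congr 1
      rw [Fin.sum_univ_succ]
      simp
    have := ih hL' (n / b) a' hrep
    rw [hsum'] at this
    rw [dsum_cons, Fin.sum_univ_succ, hmod]
    simp only [List.length_cons]
    have hmd : a 0 % b + b * (a 0 / b) = a 0 := Nat.mod_add_div _ _
    have hle : a 0 / b ≤ b * (a 0 / b) := Nat.le_mul_of_pos_left _ hb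
    omega

private lemma minCoinCount_eq_dsum (L : List ℕ) (hL : ∀ x ∈ L, 1 ≤ x) (n : ℕ) :
    minCoinCount (L.length + 1) (fun i => (L.take i).prod) n = dsum L n := by
  unfold minCoinCount
  obtain ⟨a, h1, h2⟩ := dsum_exists L n
  apply le_antisymm
  · exact Nat.sInf_le ⟨a, h1, h2⟩
  · apply le_csInf
    · exact ⟨dsum L n, a, h1, h2⟩
    · rintro k ⟨a', h1', h2'⟩
      exact h2' ▸ dsum_le L hL n a' h1'

private lemma minCoinCount_congr (d : ℕ) (s s' : ℕ → ℕ) (h : ∀ i < d, s i = s' i) (n : ℕ) :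
    minCoinCount d s n = minCoinCount d s' n := by
  unfold minCoinCount
  congr 1
  ext k
  constructor
  · rintro ⟨a, h1, h2⟩
    exact ⟨a, by rw [← h1]; exact Finset.sum_congr rfl fun i _ => by rw [h i i.isLt], h2⟩
  · rintro ⟨a, h1, h2⟩
    exact ⟨a, by rw [← h1]; exact Finset.sum_congr rfl fun i _ => by rw [h i i.isLt], h2⟩

private lemma sum_range_mul (g : ℕ → ℕ) (b : ℕ) : ∀ Q : ℕ,
    ∑ n ∈ Finset.range (b * Q), g n
      = ∑ q ∈ Finset.range Q, ∑ r ∈ Finset.range b, g (b * q + r) := by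
  intro Q
  induction Q with
  | zero => simp
  | succ Q ih =>
    rw [Nat.mul_succ, Finset.sum_range_add, ih, Finset.sum_range_succ]

private lemma dsum_total : ∀ L : List ℕ, (∀ x ∈ L, 1 ≤ x) →
    2 * ∑ n ∈ Finset.range L.prod, dsum L n = L.prod * (L.map (· - 1)).sum := by
  intro L
  induction L with
  | nil => simp [dsum_nil]
  | cons b L ih =>
    intro hL
    have hb : 1 ≤ b := hL b List.mem_cons_self
    have hL' : ∀ x ∈ L, 1 ≤ x := fun x hx => hL x (List.mem_cons_of_mem _ hx)
    rw [List.prod_cons, sum_range_mul]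
    have hin : ∀ q ∈ Finset.range L.prod,
        (∑ r ∈ Finset.range b, dsum (b :: L) (b * q + r))
          = (∑ r ∈ Finset.range b, r) + b * dsum L q := by
      intro q _
      have : ∀ r ∈ Finset.range b, dsum (b :: L) (b * q + r) = r + dsum L q := by
        intro r hr
        rw [Finset.mem_range] at hr
        rw [dsum_cons, Nat.mul_add_mod, Nat.mod_eq_of_lt hr, Nat.mul_add_div (by omega),
          Nat.div_eq_of_lt hr, Nat.add_zero]
      rw [Finset.sum_congr rfl this, Finset.sum_add_distrib, Finset.sum_const,
        Finset.card_range, smul_eq_mul, mul_comm]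
    rw [Finset.sum_congr rfl hin, Finset.sum_add_distrib, Finset.sum_const, Finset.card_range,
      smul_eq_mul, List.map_cons, List.sum_cons]
    rw [Nat.mul_add, Nat.mul_add, ← Finset.mul_sum, mul_left_comm 2 b, ih hL']
    have hg : 2 * (∑ r ∈ Finset.range b, r) = b * (b - 1) := by
      rw [mul_comm]; exact Finset.sum_range_id_mul_two b
    rw [mul_left_comm 2 L.prod, hg]
    ring

private lemma smoothing (M : ℕ) (hM : 1 ≤ M) :
    ∀ (c k : ℕ) (b : Fin k → ℕ),
      (Finset.univ.filter (fun i => b i ≠ M)).card ≤ c →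
      (∀ i, 1 ≤ b i) → (∑ i, b i) = k * M →
      (∀ i, b i = M) ∨ ((∏ i, b i) < M ^ k) := by
  intro c
  induction c with
  | zero =>
    intro k b hc _ _
    left
    intro i
    by_contra hne
    have hmem : i ∈ Finset.univ.filter (fun i => b i ≠ M) := by simp [hne]
    have := Finset.card_pos.mpr ⟨i, hmem⟩
    omega
  | succ c ih =>
    intro k b hc h1 hsum
    by_cases hall : ∀ i, b i = M
    · exact Or.inl hall
    right
    push_neg at hall
    obtain ⟨j, hj⟩ := hall
    have hconst : (∑ _i : Fin k, M) = k * M := by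
      rw [Finset.sum_const, Finset.card_univ, Fintype.card_fin, smul_eq_mul]
    have hex_lt : ∃ i, b i < M := by
      by_contra hcon
      push_neg at hcon
      have : (∑ _i : Fin k, M) < ∑ i, b i :=
        Finset.sum_lt_sum (fun i _ => hcon i) ⟨j, Finset.mem_univ j, lt_of_le_of_ne (hcon j) (Ne.symm hj)⟩
      omega
    have hex_gt : ∃ i, M < b i := by
      by_contra hcon
      push_neg at hcon
      have : (∑ i, b i) < ∑ _i : Fin k, M :=
        Finset.sum_lt_sum (fun i _ => hcon i) ⟨j, Finset.mem_univ j, lt_of_le_of_ne (hcon j) hj⟩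
      omega
    obtain ⟨p, hp⟩ := hex_lt
    obtain ⟨q, hq⟩ := hex_gt
    have hpq : p ≠ q := fun h => by rw [h] at hp; omega
    set e : ℕ := b q - M with he
    have hbq : b q = M + e := by omega
    have he1 : 1 ≤ e := by omega
    set b' : Fin k → ℕ := fun t => if t = p then M else if t = q then b p + e else b t with hb'
    have hb'p : b' p = M := by simp [hb']
    have hb'q : b' q = b p + e := by simp [hb', hpq.symm]
    have hb'other : ∀ t, t ≠ p → t ≠ q → b' t = b t := by
      intro t h1' h2'; simp [hb', h1', h2']
    have hqmem : q ∈ (Finset.univ.erase p) := Finset.mem_erase.mpr ⟨hpq.symm, Finset.mem_univ q⟩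
    have hrest_eq : ∀ t ∈ (Finset.univ.erase p).erase q, b' t = b t := by
      intro t ht
      obtain ⟨htq, htp'⟩ := Finset.mem_erase.mp ht
      obtain ⟨htp, _⟩ := Finset.mem_erase.mp htp'
      exact hb'other t htp htq
    -- decompose sums and products
    have hdecS : ∀ f : Fin k → ℕ, (∑ i, f i) = f p + (f q + ∑ t ∈ (Finset.univ.erase p).erase q, f t) := by
      intro f
      rw [Finset.add_sum_erase _ f hqmem, Finset.add_sum_erase _ f (Finset.mem_univ p)]
    have hdecP : ∀ f : Fin k → ℕ, (∏ i, f i) = f p * (f q * ∏ t ∈ (Finset.univ.erase p).erase q, f t) := by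
      intro f
      rw [Finset.mul_prod_erase _ f hqmem, Finset.mul_prod_erase _ f (Finset.mem_univ p)]
    have h3s : (∑ t ∈ (Finset.univ.erase p).erase q, b' t)
        = ∑ t ∈ (Finset.univ.erase p).erase q, b t := Finset.sum_congr rfl hrest_eq
    have h3p : (∏ t ∈ (Finset.univ.erase p).erase q, b' t)
        = ∏ t ∈ (Finset.univ.erase p).erase q, b t := Finset.prod_congr rfl hrest_eq
    have hsum' : (∑ i, b' i) = k * M := by
      rw [hdecS b'] ; rw [hdecS b] at hsum
      rw [hb'p, hb'q, h3s]
      omega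
    have h1' : ∀ i, 1 ≤ b' i := by
      intro t
      rcases eq_or_ne t p with rfl | htp
      · rw [hb'p]; exact hM
      rcases eq_or_ne t q with rfl | htq
      · rw [hb'q]; omega
      · rw [hb'other t htp htq]; exact h1 t
    have hcard : (Finset.univ.filter (fun i => b' i ≠ M)).card ≤ c := by
      have hsub : (Finset.univ.filter (fun i => b' i ≠ M))
          ⊆ (Finset.univ.filter (fun i => b i ≠ M)).erase p := by
        intro t ht
        rw [Finset.mem_filter] at ht
        have htp : t ≠ p := by
          intro h; rw [h, hb'p] at ht; exact ht.2 rfl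
        refine Finset.mem_erase.mpr ⟨htp, Finset.mem_filter.mpr ⟨Finset.mem_univ t, ?_⟩⟩
        rcases eq_or_ne t q with rfl | htq
        · omega
        · rw [hb'other t htp htq] at ht; exact ht.2
      have hpmem : p ∈ Finset.univ.filter (fun i => b i ≠ M) := by
        refine Finset.mem_filter.mpr ⟨Finset.mem_univ p, ?_⟩; omega
      have := Finset.card_le_card hsub
      rw [Finset.card_erase_of_mem hpmem] at this
      have hpos := Finset.card_pos.mpr ⟨p, hpmem⟩
      omega
    have hPpos : 0 < ∏ t ∈ (Finset.univ.erase p).erase q, b t :=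
      Finset.prod_pos fun t _ => h1 t
    have hprodlt : (∏ i, b i) < ∏ i, b' i := by
      rw [hdecP b, hdecP b', hb'p, hb'q, h3p, hbq]
      rw [← mul_assoc, ← mul_assoc]
      apply Nat.mul_lt_mul_of_lt_of_le _ le_rfl hPpos
      calc b p * (M + e) = b p * M + b p * e := by ring
        _ < b p * M + M * e := by
            have : b p * e < M * e := Nat.mul_lt_mul_of_lt_of_le hp le_rfl he1
            omega
        _ = M * (b p + e) := by ring
    rcases ih k b' hcard h1' hsum' with hall' | hlt'
    · have : (∏ i, b' i) = M ^ k := by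
        rw [Finset.prod_congr rfl fun i _ => hall' i, Finset.prod_const, Finset.card_univ,
          Fintype.card_fin]
      omega
    · omega

private lemma map_range_sum (f : ℕ → ℕ) : ∀ k : ℕ,
    ((List.range k).map f).sum = ∑ i ∈ Finset.range k, f i := by
  intro k
  induction k with
  | zero => simp
  | succ k ih => rw [List.range_succ, List.map_append, List.sum_append, Finset.sum_range_succ, ih]; simp

private lemma map_range_prod (f : ℕ → ℕ) : ∀ k : ℕ,
    ((List.range k).map f).prod = ∏ i ∈ Finset.range k, f i := by
  intro k
  induction k with
  | zero => simp
  | succ k ih => rw [List.range_succ, List.map_append, List.prod_append, Finset.prod_range_succ, ih]; simp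

/-- Equality case of Theorem 1 (`0`-based indexing): for `d ≥ 2`, `M ≥ 2`, and
a divisor chain `s 0 = 1, …, s (d-1) = m = M^(d-1)`, the total minimal coin
count over one period equals that of the geometric denominations
`M^0, …, M^(d-1)` if and only if `s i = M^i` for every `i < d`. -/
theorem dilatedRNN_equality_case (d M : ℕ) (hd : 2 ≤ d) (hM : 2 ≤ M)
    (s : ℕ → ℕ) (hs0 : s 0 = 1)
    (hchain : ∀ i, i + 1 < d → ∃ k, 0 < k ∧ s (i + 1) = k * s i)
    (hsd : s (d - 1) = M ^ (d - 1)) :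
    (∑ n ∈ Finset.range (M ^ (d - 1)), minCoinCount d s n =
        ∑ n ∈ Finset.range (M ^ (d - 1)), minCoinCount d (fun i => M ^ i) n) ↔
      ∀ i < d, s i = M ^ i := by
  have hd1 : d - 1 + 1 = d := by omega
  -- positivity of s
  have spos : ∀ i, i < d → 0 < s i := by
    intro i
    induction i with
    | zero => intro _; omega
    | succ i ih =>
      intro h
      obtain ⟨k, hk, hks⟩ := hchain i h
      have := ih (by omega)
      rw [hks]
      exact Nat.mul_pos hk this
  set f : ℕ → ℕ := fun i => s (i + 1) / s i with hf
  have hratio : ∀ i, i + 1 < d → s (i + 1) = f i * s i := by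
    intro i hi
    obtain ⟨k, hk, hks⟩ := hchain i hi
    have : f i = k := by
      simp only [hf]
      rw [hks, Nat.mul_div_cancel k (spos i (by omega))]
    rw [this, hks]
  have hfpos : ∀ i, i + 1 < d → 1 ≤ f i := by
    intro i hi
    rcases Nat.eq_zero_or_pos (f i) with h0 | h1
    · exfalso
      have hp := spos (i + 1) hi
      rw [hratio i hi, h0, zero_mul] at hp
      omega
    · exact h1
  set L : List ℕ := (List.range (d - 1)).map f with hLdef
  have hlen : L.length = d - 1 := by simp [hLdef]
  have hL1 : ∀ x ∈ L, 1 ≤ x := by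
    intro x hx
    rw [hLdef, List.mem_map] at hx
    obtain ⟨i, hi, rfl⟩ := hx
    rw [List.mem_range] at hi
    exact hfpos i (by omega)
  have htake : ∀ i, i ≤ d - 1 → (L.take i).prod = s i := by
    intro i
    induction i with
    | zero => intro _; simp [hs0]
    | succ i ih =>
      intro h
      have hi : i < L.length := by omega
      rw [List.prod_take_succ L i hi]
      have hget : L[i] = f i := by
        simp [hLdef]
      rw [hget, ih (by omega), ← mul_comm (f i) (s i), ← hratio i (by omega)]
  have hLprod : L.prod = M ^ (d - 1) := by
    have h := htake (d - 1) le_rfl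
    have h2 : L.take (d - 1) = L := by rw [← hlen]; exact List.take_length
    rw [← hsd, ← h, h2]
  -- identify minCoinCount d s with dsum L
  have hs_eq : ∀ n, minCoinCount d s n = dsum L n := by
    intro n
    rw [minCoinCount_congr d s (fun i => (L.take i).prod)
      (fun i hi => (htake i (by omega)).symm) n]
    rw [show d = L.length + 1 by omega]
    exact minCoinCount_eq_dsum L hL1 n
  -- geometric side
  set L' : List ℕ := List.replicate (d - 1) M with hL'def
  have hL'len : L'.length = d - 1 := by simp [hL'def]
  have hL'1 : ∀ x ∈ L', 1 ≤ x := by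
    intro x hx
    rw [hL'def] at hx
    rw [List.eq_of_mem_replicate hx]
    omega
  have hL'take : ∀ i, i < d → (L'.take i).prod = M ^ i := by
    intro i hi
    rw [hL'def, List.take_replicate, List.prod_replicate]
    congr 1
    omega
  have hL'prod : L'.prod = M ^ (d - 1) := by
    rw [hL'def, List.prod_replicate]
  have hg_eq : ∀ n, minCoinCount d (fun i => M ^ i) n = dsum L' n := by
    intro n
    rw [minCoinCount_congr d (fun i => M ^ i) (fun i => (L'.take i).prod)
      (fun i hi => (hL'take i hi).symm) n]
    rw [show d = L'.length + 1 by omega]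
    exact minCoinCount_eq_dsum L' hL'1 n
  -- totals
  have htotL : 2 * ∑ n ∈ Finset.range (M ^ (d - 1)), dsum L n
      = M ^ (d - 1) * (L.map (· - 1)).sum := by
    rw [← hLprod]; exact dsum_total L hL1
  have htotL' : 2 * ∑ n ∈ Finset.range (M ^ (d - 1)), dsum L' n
      = M ^ (d - 1) * ((d - 1) * (M - 1)) := by
    rw [← hL'prod]
    rw [dsum_total L' hL'1]
    rw [hL'def, List.map_replicate, List.sum_replicate, smul_eq_mul]
  have hMpos : 0 < M ^ (d - 1) := Nat.pow_pos (by omega)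
  constructor
  · intro heq
    rw [Finset.sum_congr rfl (fun n _ => hs_eq n),
        Finset.sum_congr rfl (fun n _ => hg_eq n)] at heq
    have h2 : M ^ (d - 1) * (L.map (· - 1)).sum = M ^ (d - 1) * ((d - 1) * (M - 1)) := by
      rw [← htotL, ← htotL', heq]
    have hSm : (L.map (· - 1)).sum = (d - 1) * (M - 1) :=
      Nat.eq_of_mul_eq_mul_left hMpos h2
    -- turn into Finset statements about f
    have hSm' : (∑ i ∈ Finset.range (d - 1), (f i - 1)) = (d - 1) * (M - 1) := by
      rw [← hSm, hLdef, List.map_map, map_range_sum]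
      rfl
    have hfs : (∑ i ∈ Finset.range (d - 1), f i) = (d - 1) * M := by
      have : (∑ i ∈ Finset.range (d - 1), f i)
          = (∑ i ∈ Finset.range (d - 1), ((f i - 1) + 1)) := by
        apply Finset.sum_congr rfl
        intro i hi
        rw [Finset.mem_range] at hi
        have := hfpos i (by omega)
        omega
      rw [this, Finset.sum_add_distrib, hSm', Finset.sum_const, Finset.card_range, smul_eq_mul,
        mul_one]
      have : (d - 1) * (M - 1) + (d - 1) = (d - 1) * ((M - 1) + 1) := by ring
      rw [this]
      congr 1
      omega
    have hfp : (∏ i ∈ Finset.range (d - 1), f i) = M ^ (d - 1) := by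
      rw [← hLprod, hLdef, map_range_prod]
    have hsm := smoothing M (by omega) ((Finset.univ.filter
        (fun i : Fin (d - 1) => f i ≠ M)).card) (d - 1) (fun i : Fin (d - 1) => f (i : ℕ))
      le_rfl (fun i => hfpos i (by omega)) (by rw [Fin.sum_univ_eq_sum_range]; exact hfs)
    rcases hsm with hall | hlt
    · intro i
      induction i with
      | zero => intro _; simpa using hs0
      | succ i ih =>
        intro hi
        have hfi : f i = M := hall ⟨i, by omega⟩
        rw [hratio i hi, hfi, ih (by omega), pow_succ, mul_comm]
    · rw [Fin.prod_univ_eq_prod_range] at hlt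
      omega
  · intro hall
    apply Finset.sum_congr rfl
    intro n _
    exact minCoinCount_congr d s (fun i => M ^ i) (fun i hi => hall i hi) n
end

section
/- Memory-capacity comparison between the DilatedRNN and the regular skip RNN: for every d ≥ 1, setting m = 2^{d−1}, one has ∑_{n=1}^{m} r_{dil}(n) ≤ ∑_{n=1}^{m} r_{skip}(n), where r_{dil}(n) is the minimal coin count of n with denominations (2^0, 2^1, …, 2^{d−1}) and r_{skip}(n) is the minimal coin count of n with denominations {1, m}. Explicitly, (d−1) · 2^{d−2} + 1 ≤ 2^{d−2} · (2^{d−1} − 1) + 1 for d ≥ 2, so the DilatedRNN's mean recurrent length grows only logarithmically in m while the regular skip RNN's grows linearly in m. -/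
/-- The minimal coin count of `n` with denominations `{1, m}`. -/
noncomputable def skipCoinCount (m n : ℕ) : ℕ :=
  sInf {k : ℕ | ∃ a b : ℕ, a * 1 + b * m = n ∧ a + b = k}

/-- Memory-capacity comparison between the DilatedRNN and the regular skip
RNN: for every `d ≥ 1` with `m = 2^(d−1)`, the total minimal coin count with
dilated denominations `2^0, …, 2^(d−1)` is at most that with denominations
`{1, m}`; explicitly for `d ≥ 2`,
`(d−1)·2^(d−2) + 1 ≤ 2^(d−2)·(2^(d−1) − 1) + 1`. -/
theorem dilated_vs_skip_memory (d : ℕ) (hd : 1 ≤ d) :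
    (∑ n ∈ Finset.Icc 1 (2 ^ (d - 1)), minCoinCount d (fun i => 2 ^ i) n ≤
        ∑ n ∈ Finset.Icc 1 (2 ^ (d - 1)), skipCoinCount (2 ^ (d - 1)) n) ∧
      (2 ≤ d → (d - 1) * 2 ^ (d - 2) + 1 ≤ 2 ^ (d - 2) * (2 ^ (d - 1) - 1) + 1) := by
  constructor
  · apply Finset.sum_le_sum
    intro n _
    have hne : {k : ℕ | ∃ a b : ℕ, a * 1 + b * 2 ^ (d - 1) = n ∧ a + b = k}.Nonempty :=
      ⟨n, n, 0, by ring, by ring⟩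
    obtain ⟨a, b, hab, hsum⟩ := Nat.sInf_mem hne
    apply Nat.sInf_le
    refine ⟨fun i => (if (i : ℕ) = 0 then a else 0) + (if (i : ℕ) = d - 1 then b else 0),
      ?_, ?_⟩
    · have h1 : (∑ i : Fin d,
          ((if (i : ℕ) = 0 then a else 0) + (if (i : ℕ) = d - 1 then b else 0)) * 2 ^ (i : ℕ))
          = ∑ j ∈ Finset.range d,
            ((if j = 0 then a else 0) + (if j = d - 1 then b else 0)) * 2 ^ j :=
        Fin.sum_univ_eq_sum_range
          (fun j => ((if j = 0 then a else 0) + (if j = d - 1 then b else 0)) * 2 ^ j) d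
      rw [h1]
      have h2 : ∀ j ∈ Finset.range d,
          ((if j = 0 then a else 0) + (if j = d - 1 then b else 0)) * 2 ^ j
          = (if j = 0 then a * 2 ^ j else 0) + (if j = d - 1 then b * 2 ^ j else 0) := by
        intro j _
        split_ifs <;> ring
      rw [Finset.sum_congr rfl h2, Finset.sum_add_distrib,
        Finset.sum_ite_eq' (Finset.range d) 0 (fun j => a * 2 ^ j),
        Finset.sum_ite_eq' (Finset.range d) (d - 1) (fun j => b * 2 ^ j)]
      have h0 : (0 : ℕ) ∈ Finset.range d := Finset.mem_range.mpr hd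
      have hd1 : d - 1 ∈ Finset.range d := Finset.mem_range.mpr (by omega)
      rw [if_pos h0, if_pos hd1]
      simpa using hab
    · have h1 : (∑ i : Fin d,
          ((if (i : ℕ) = 0 then a else 0) + (if (i : ℕ) = d - 1 then b else 0)))
          = ∑ j ∈ Finset.range d,
            ((if j = 0 then a else 0) + (if j = d - 1 then b else 0)) :=
        Fin.sum_univ_eq_sum_range
          (fun j => (if j = 0 then a else 0) + (if j = d - 1 then b else 0)) d
      rw [h1, Finset.sum_add_distrib,
        Finset.sum_ite_eq' (Finset.range d) 0 (fun _ => a),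
        Finset.sum_ite_eq' (Finset.range d) (d - 1) (fun _ => b)]
      have h0 : (0 : ℕ) ∈ Finset.range d := Finset.mem_range.mpr hd
      have hd1 : d - 1 ∈ Finset.range d := Finset.mem_range.mpr (by omega)
      rw [if_pos h0, if_pos hd1, hsum]
      rfl
  · intro _
    have h : d - 1 ≤ 2 ^ (d - 1) - 1 := by
      have := Nat.lt_two_pow_self (n := d - 1)
      omega
    have h2 : (d - 1) * 2 ^ (d - 2) ≤ 2 ^ (d - 2) * (2 ^ (d - 1) - 1) := by
      rw [mul_comm]
      exact Nat.mul_le_mul_left _ h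
    omega
end
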